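/- arXiv:1302.3531 — 4 statements merged into one kernel-verified Lean document; each statement's English description precedes it below -/
import Mathlib

section
/- Let 0 ≤ t < 1/8, set ε = (1/8 - t)^{1/3}, and let g be a graphon with e(g) = 1/2, t(g) = t, and I(g) = I₀(1/2 + ε) (i.e. g is a minimizer of the rate function under these constraints). Then there exists a measurable set B ⊆ [0,1] with Lebesgue measure 1/2 such that, for almost every (x,y), g(x,y) = 1/2 + ε if exactly one of x, y lies in B, and g(x,y) = 1/2 - ε if x, y are both in B or both outside B. (Equivalently, g agrees, up to a measure-preserving transformation of [0,1], with the block graphon ĝ taking value 1/2+ε on the off-diagonal blocks and 1/2-ε on the diagonal blocks determined by the partition [0,1/2), [1/2,1].) -/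
open MeasureTheory Set

/-- `I₀(u) = (1/2)[u ln u + (1-u) ln(1-u)]`; since `Real.log 0 = 0`,
this automatically satisfies the continuous extension `I₀(0) = I₀(1) = 0`. -/
noncomputable def I0 (u : ℝ) : ℝ :=
  (1/2) * (u * Real.log u + (1 - u) * Real.log (1 - u))

/-- A graphon: a measurable function `[0,1]² → [0,1]`, symmetric on `[0,1]²`. -/
def IsGraphon (g : ℝ → ℝ → ℝ) : Prop :=
  Measurable (Function.uncurry g) ∧
  (∀ x ∈ Icc (0:ℝ) 1, ∀ y ∈ Icc (0:ℝ) 1, g x y = g y x) ∧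
  (∀ x ∈ Icc (0:ℝ) 1, ∀ y ∈ Icc (0:ℝ) 1, g x y ∈ Icc (0:ℝ) 1)

/-- Edge density `e(g) = ∫∫ g`. -/
noncomputable def edgeDensity (g : ℝ → ℝ → ℝ) : ℝ :=
  ∫ x in Icc (0:ℝ) 1, ∫ y in Icc (0:ℝ) 1, g x y

/-- Triangle density `t(g) = ∫∫∫ g(x,y) g(y,z) g(z,x)`. -/
noncomputable def triangleDensity (g : ℝ → ℝ → ℝ) : ℝ :=
  ∫ x in Icc (0:ℝ) 1, ∫ y in Icc (0:ℝ) 1, ∫ z in Icc (0:ℝ) 1,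
    g x y * g y z * g z x

/-- Rate function `I(g) = ∫∫ I₀(g(x,y))`. -/
noncomputable def rateFn (g : ℝ → ℝ → ℝ) : ℝ :=
  ∫ x in Icc (0:ℝ) 1, ∫ y in Icc (0:ℝ) 1, I0 (g x y)

noncomputable def psi (u : ℝ) : ℝ := I0 (1/2 + Real.sqrt u)

lemma I0_symm (u : ℝ) : I0 (1 - u) = I0 u := by
  unfold I0
  have : (1 : ℝ) - (1 - u) = u := by ring
  rw [this]; ring

lemma psi_sq (s : ℝ) : psi (s^2) = I0 (1/2 + s) := by
  unfold psi
  rw [Real.sqrt_sq_eq_abs]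
  rcases abs_cases s with ⟨h1, _⟩ | ⟨h1, _⟩
  · rw [h1]
  · rw [h1]
    have := I0_symm (1/2 + s)
    have h2 : (1:ℝ) - (1/2 + s) = 1/2 + -s := by ring
    rw [h2] at this
    exact this

lemma continuous_I0 : Continuous I0 := by
  unfold I0
  exact continuous_const.mul (Real.continuous_mul_log.add
    (Real.continuous_mul_log.comp (continuous_const.sub continuous_id)))

lemma continuous_psi : Continuous psi :=
  continuous_I0.comp (continuous_const.add Real.continuous_sqrt)

lemma hasDerivAt_I0 {v : ℝ} (hv : v ∈ Ioo (0:ℝ) 1) :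
    HasDerivAt I0 ((1/2) * (Real.log v - Real.log (1 - v))) v := by
  obtain ⟨h0, h1⟩ := hv
  have hv0 : v ≠ 0 := ne_of_gt h0
  have hv1 : (1:ℝ) - v ≠ 0 := by linarith
  have H1 : HasDerivAt (fun x : ℝ => x * Real.log x) (Real.log v + 1) v :=
    Real.hasDerivAt_mul_log hv0
  have H2' : HasDerivAt (fun x : ℝ => (1:ℝ) - x) (-1) v := by
    simpa using (hasDerivAt_id v).const_sub 1
  have H2 : HasDerivAt (fun x : ℝ => (1 - x) * Real.log (1 - x))
      ((Real.log (1 - v) + 1) * (-1)) v :=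
    (Real.hasDerivAt_mul_log hv1).comp v H2'
  have := (H1.add H2).const_mul (1/2 : ℝ)
  refine this.congr_deriv ?_
  ring

/-- `A x = log(1+x) - log(1-x)`, twice `artanh`. -/
noncomputable def Afun (x : ℝ) : ℝ := Real.log (1 + x) - Real.log (1 - x)

lemma hasDerivAt_Afun {x : ℝ} (hx : x ∈ Ioo (-1:ℝ) 1) :
    HasDerivAt Afun (1/(1+x) + 1/(1-x)) x := by
  obtain ⟨h0, h1⟩ := hx
  have h1x : (1:ℝ) + x ≠ 0 := by linarith
  have h2x : (1:ℝ) - x ≠ 0 := by linarith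
  have H1 : HasDerivAt (fun x : ℝ => Real.log (1 + x)) (1/(1+x)) x := by
    have := (Real.hasDerivAt_log h1x).comp x ((hasDerivAt_id x).const_add 1)
    exact this.congr_deriv (by simp)
  have H2 : HasDerivAt (fun x : ℝ => Real.log (1 - x)) (-(1/(1-x))) x := by
    have := (Real.hasDerivAt_log h2x).comp x ((hasDerivAt_id x).const_sub 1)
    exact this.congr_deriv (by simp)
  have := H1.sub H2
  refine this.congr_deriv ?_
  ring

lemma Afun_pos {x : ℝ} (hx : x ∈ Ioo (0:ℝ) 1) : 0 < Afun x := by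
  obtain ⟨h0, h1⟩ := hx
  have l1 : 0 < Real.log (1 + x) := Real.log_pos (by linarith)
  have l2 : Real.log (1 - x) < 0 :=
    Real.log_neg (by linarith) (by linarith)
  unfold Afun; linarith

lemma Afun_lt {x : ℝ} (hx : x ∈ Ioo (0:ℝ) 1) : Afun x < 2*x/(1-x^2) := by
  obtain ⟨h0, h1⟩ := hx
  set H : ℝ → ℝ := fun x => 2*x/(1-x^2) - Afun x with hH
  have key : StrictMonoOn H (Ico (0:ℝ) 1) := by
    apply strictMonoOn_of_deriv_pos (convex_Ico 0 1)
    · apply ContinuousOn.sub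
      · apply ContinuousOn.div
        · exact (continuous_const.mul continuous_id).continuousOn
        · exact (continuous_const.sub (continuous_pow 2)).continuousOn
        · intro y hy
          simp only [mem_Ico] at hy
          nlinarith [hy.1, hy.2]
      · intro y hy
        simp only [mem_Ico] at hy
        have c1 : ContinuousAt (fun x : ℝ => Real.log (1+x)) y :=
          (Real.continuousAt_log (by linarith [hy.1, hy.2] : (1:ℝ)+y ≠ 0)).comp
            ((continuous_const.add continuous_id).continuousAt)
        have c2 : ContinuousAt (fun x : ℝ => Real.log (1-x)) y :=
          (Real.continuousAt_log (by intro h; nlinarith [hy.1, hy.2] : (1:ℝ)-y ≠ 0)).comp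
            ((continuous_const.sub continuous_id).continuousAt)
        exact ((c1.sub c2).continuousWithinAt : ContinuousWithinAt Afun _ y)
    · intro y hy
      rw [interior_Ico] at hy
      obtain ⟨h0, h1⟩ := hy
      have h1y : (1:ℝ) + y ≠ 0 := by linarith
      have h2y : (1:ℝ) - y ≠ 0 := by nlinarith
      have hden : (1:ℝ) - y^2 ≠ 0 := by nlinarith
      have D1 : HasDerivAt (fun x : ℝ => 2*x/(1-x^2)) ((2*(1-y^2) - 2*y*(-(2*y)))/(1-y^2)^2) y := by
        have hn : HasDerivAt (fun x : ℝ => 2*x) 2 y := by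
          simpa using (hasDerivAt_id y).const_mul (2:ℝ)
        have hd : HasDerivAt (fun x : ℝ => 1-x^2) (-(2*y)) y := by
          have := (hasDerivAt_pow 2 y).const_sub 1
          simpa using this
        exact hn.div hd hden
      have D : HasDerivAt H ((2*(1-y^2) - 2*y*(-(2*y)))/(1-y^2)^2 - (1/(1+y) + 1/(1-y))) y :=
        D1.sub (hasDerivAt_Afun ⟨by linarith, h1⟩)
      rw [D.deriv]
      have e1 : (2*(1-y^2) - 2*y*(-(2*y)))/(1-y^2)^2 - (1/(1+y) + 1/(1-y)) = 4*y^2/(1-y^2)^2 := by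
        field_simp
        ring
      rw [e1]
      positivity
  have h0' : H 0 = 0 := by simp [hH, Afun]
  have := key (left_mem_Ico.2 one_pos) (mem_Ico.2 ⟨le_of_lt h0, h1⟩) h0
  rw [h0'] at this
  simp only [hH] at this
  linarith

/-- `G x = A x / x`; strictly monotone on `(0,1)`. -/
noncomputable def Gfun (x : ℝ) : ℝ := Afun x / x

lemma Gfun_strictMono : StrictMonoOn Gfun (Ioo (0:ℝ) 1) := by
  apply strictMonoOn_of_deriv_pos (convex_Ioo 0 1)
  · intro y hy
    obtain ⟨h0, h1⟩ := hy
    have c1 : ContinuousAt (fun x : ℝ => Real.log (1+x)) y :=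
      (Real.continuousAt_log (by linarith : (1:ℝ)+y ≠ 0)).comp
        ((continuous_const.add continuous_id).continuousAt)
    have c2 : ContinuousAt (fun x : ℝ => Real.log (1-x)) y :=
      (Real.continuousAt_log (by intro h; nlinarith : (1:ℝ)-y ≠ 0)).comp
        ((continuous_const.sub continuous_id).continuousAt)
    exact (((c1.sub c2).div continuousAt_id (ne_of_gt h0)).continuousWithinAt :
      ContinuousWithinAt Gfun _ y)
  · intro y hy
    rw [interior_Ioo] at hy
    obtain ⟨h0, h1⟩ := hy
    have D : HasDerivAt Gfun (((1/(1+y) + 1/(1-y)) * y - Afun y * 1)/y^2) y :=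
      (hasDerivAt_Afun ⟨by linarith, h1⟩).div (hasDerivAt_id y) (ne_of_gt h0)
    rw [D.deriv]
    have key : Afun y < 2*y/(1-y^2) := Afun_lt ⟨h0, h1⟩
    have e1 : (1/(1+y) + 1/(1-y)) * y = 2*y/(1-y^2) := by
      have h1y : (1:ℝ) + y ≠ 0 := by linarith
      have h2y : (1:ℝ) - y ≠ 0 := by nlinarith
      have hden : (1:ℝ) - y^2 ≠ 0 := by nlinarith
      field_simp
      ring
    rw [e1]
    apply div_pos (by linarith) (by positivity)

lemma hasDerivAt_psi {u : ℝ} (hu : u ∈ Ioo (0:ℝ) (1/4)) :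
    HasDerivAt psi (Gfun (2 * Real.sqrt u) / 2) u := by
  obtain ⟨h0, h1⟩ := hu
  have hs0 : 0 < Real.sqrt u := Real.sqrt_pos.2 h0
  have hs1 : Real.sqrt u < 1/2 := by
    have h14 : Real.sqrt (1/4) = 1/2 := by
      rw [show (1/4 : ℝ) = (1/2)^2 by norm_num, Real.sqrt_sq (by norm_num)]
    have : Real.sqrt u < Real.sqrt (1/4) := Real.sqrt_lt_sqrt (le_of_lt h0) h1
    linarith [this, h14.le, h14.ge]
  have hv : (1/2 + Real.sqrt u) ∈ Ioo (0:ℝ) 1 := ⟨by linarith, by linarith⟩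
  have Hsq : HasDerivAt (fun x : ℝ => 1/2 + Real.sqrt x) (1/(2*Real.sqrt u)) u := by
    simpa using (Real.hasDerivAt_sqrt (ne_of_gt h0)).const_add (1/2 : ℝ)
  have := (hasDerivAt_I0 hv).comp u Hsq
  refine this.congr_deriv ?_
  symm
  unfold Gfun Afun
  rw [show (1:ℝ) - (1/2 + Real.sqrt u) = 1/2 - Real.sqrt u by ring,
    show (1 + 2*Real.sqrt u) = 2*(1/2+Real.sqrt u) by ring,
    show (1 - 2*Real.sqrt u) = 2*(1/2-Real.sqrt u) by ring,
    Real.log_mul two_ne_zero (by linarith), Real.log_mul two_ne_zero (by linarith)]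
  have hs0' : Real.sqrt u ≠ 0 := ne_of_gt hs0
  field_simp
  ring

lemma sqrt_mem_aux {u : ℝ} (hu : u ∈ Ioo (0:ℝ) (1/4)) :
    0 < Real.sqrt u ∧ Real.sqrt u < 1/2 := by
  obtain ⟨h0, h1⟩ := hu
  refine ⟨Real.sqrt_pos.2 h0, ?_⟩
  have h14 : Real.sqrt (1/4) = 1/2 := by
    rw [show (1/4 : ℝ) = (1/2)^2 by norm_num, Real.sqrt_sq (by norm_num)]
  have : Real.sqrt u < Real.sqrt (1/4) := Real.sqrt_lt_sqrt (le_of_lt h0) h1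
  linarith [h14.le, h14.ge]

lemma deriv_psi_eq {u : ℝ} (hu : u ∈ Ioo (0:ℝ) (1/4)) :
    deriv psi u = Gfun (2 * Real.sqrt u) / 2 := (hasDerivAt_psi hu).deriv

lemma strictMonoOn_deriv_psi : StrictMonoOn (deriv psi) (Ioo (0:ℝ) (1/4)) := by
  intro a ha b hb hab
  rw [deriv_psi_eq ha, deriv_psi_eq hb]
  obtain ⟨ha0, ha1⟩ := sqrt_mem_aux ha
  obtain ⟨hb0, hb1⟩ := sqrt_mem_aux hb
  have hs : Real.sqrt a < Real.sqrt b := Real.sqrt_lt_sqrt (le_of_lt ha.1) hab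
  have := Gfun_strictMono (⟨by linarith, by linarith⟩ : 2*Real.sqrt a ∈ Ioo (0:ℝ) 1)
    (⟨by linarith, by linarith⟩ : 2*Real.sqrt b ∈ Ioo (0:ℝ) 1) (by linarith)
  linarith

lemma strictConvexOn_psi : StrictConvexOn ℝ (Icc (0:ℝ) (1/4)) psi := by
  apply StrictMonoOn.strictConvexOn_of_deriv (convex_Icc 0 (1/4)) continuous_psi.continuousOn
  rw [interior_Icc]
  exact strictMonoOn_deriv_psi

lemma strictMonoOn_psi : StrictMonoOn psi (Icc (0:ℝ) (1/4)) := by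
  apply strictMonoOn_of_deriv_pos (convex_Icc 0 (1/4)) continuous_psi.continuousOn
  intro u hu
  rw [interior_Icc] at hu
  rw [deriv_psi_eq hu]
  obtain ⟨h0, h1⟩ := sqrt_mem_aux hu
  have hA : 0 < Afun (2*Real.sqrt u) := Afun_pos ⟨by linarith, by linarith⟩
  have : 0 < Gfun (2*Real.sqrt u) := div_pos hA (by linarith)
  linarith

/-- Elementary Cauchy–Schwarz for integrals. -/
lemma cs_integral {α : Type*} [MeasurableSpace α] (μ : Measure α) (f g : α → ℝ)
    (hfg : Integrable (fun x => f x * g x) μ)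
    (hf2 : Integrable (fun x => f x * f x) μ)
    (hg2 : Integrable (fun x => g x * g x) μ) :
    (∫ x, f x * g x ∂μ)^2 ≤ (∫ x, f x * f x ∂μ) * (∫ x, g x * g x ∂μ) := by
  set a := ∫ x, f x * f x ∂μ with ha
  set b := ∫ x, g x * g x ∂μ with hb
  set c := ∫ x, f x * g x ∂μ with hc
  have ha0 : 0 ≤ a := integral_nonneg fun x => mul_self_nonneg _
  have hb0 : 0 ≤ b := integral_nonneg fun x => mul_self_nonneg _
  rcases eq_or_lt_of_le hb0 with hb' | hb'
  · -- b = 0 : g = 0 a.e.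
    have hzero : (fun x => g x * g x) =ᵐ[μ] 0 := by
      have := (integral_eq_zero_iff_of_nonneg_ae (Filter.Eventually.of_forall fun x => mul_self_nonneg (g x)) hg2).1 hb'.symm
      exact this
    have hg0 : g =ᵐ[μ] 0 := by
      filter_upwards [hzero] with x hx
      have : g x * g x = 0 := hx
      exact mul_self_eq_zero.1 this
    have hc0 : c = 0 := by
      rw [hc]
      rw [integral_eq_zero_of_ae]
      filter_upwards [hg0] with x hx
      simp [hx]
    rw [hc0, ← hb']
    simp [mul_zero]
  · -- b > 0
    have key : 0 ≤ ∫ x, (b * f x - c * g x) * (b * f x - c * g x) ∂μ :=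
      integral_nonneg fun x => mul_self_nonneg _
    have expand : (fun x => (b * f x - c * g x) * (b * f x - c * g x))
        = fun x => b^2 * (f x * f x) - (2*b*c) * (f x * g x) + c^2 * (g x * g x) := by
      funext x; ring
    rw [expand] at key
    have i1 : Integrable (fun x => b^2 * (f x * f x) - 2*b*c * (f x * g x)) μ :=
      (hf2.const_mul _).sub (hfg.const_mul _)
    have i2 : Integrable (fun x => c^2 * (g x * g x)) μ := hg2.const_mul _
    have i3 : Integrable (fun x => b^2 * (f x * f x)) μ := hf2.const_mul _
    have i4 : Integrable (fun x => 2*b*c * (f x * g x)) μ := hfg.const_mul _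
    rw [integral_add i1 i2, integral_sub i3 i4,
      integral_const_mul, integral_const_mul, integral_const_mul] at key
    have : 0 ≤ b^2 * a - 2*b*c*c + c^2 * b := by linarith [key]
    nlinarith [this, hb']

noncomputable def mI : Measure ℝ := MeasureTheory.volume.restrict (Set.Icc 0 1)

noncomputable def mII : Measure (ℝ × ℝ) := mI.prod mI

instance : IsProbabilityMeasure mI := by
  constructor
  rw [mI, Measure.restrict_apply_univ, Real.volume_Icc]
  norm_num

instance : IsProbabilityMeasure mII := by
  unfold mII; infer_instance

lemma mII_def : mII = mI.prod mI := rfl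

lemma mII_eq : mII = MeasureTheory.volume.restrict (Icc (0:ℝ) 1 ×ˢ Icc (0:ℝ) 1) := by
  rw [mII, mI, Measure.prod_restrict, ← Measure.volume_eq_prod]

lemma mem_ae_mI : ∀ᵐ x ∂mI, x ∈ Icc (0:ℝ) 1 := by
  rw [mI]; exact ae_restrict_mem measurableSet_Icc

lemma mem_ae_mII : ∀ᵐ p : ℝ × ℝ ∂mII, p.1 ∈ Icc (0:ℝ) 1 ∧ p.2 ∈ Icc (0:ℝ) 1 := by
  rw [mII_eq]
  filter_upwards [ae_restrict_mem (measurableSet_Icc.prod measurableSet_Icc)] with p hp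
  exact ⟨hp.1, hp.2⟩

/-- bounded a.e. measurable functions on finite measure spaces are integrable -/
lemma integrable_of_bdd {α : Type*} [MeasurableSpace α] {μ : Measure α} [IsFiniteMeasure μ]
    {f : α → ℝ} (hm : AEStronglyMeasurable f μ) {C : ℝ} (h : ∀ᵐ x ∂μ, |f x| ≤ C) :
    Integrable f μ := by
  refine Integrable.mono' (integrable_const C) hm ?_
  filter_upwards [h] with x hx
  simpa [Real.norm_eq_abs] using hx

section graphon
variable (g : ℝ → ℝ → ℝ)

noncomputable def FF : ℝ × ℝ → ℝ := fun p => g p.1 p.2 - 1/2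
noncomputable def dd : ℝ → ℝ := fun x => ∫ y, FF g (x, y) ∂mI
noncomputable def rr : ℝ → ℝ := fun x => ∫ y, FF g (x, y) * FF g (x, y) ∂mI
noncomputable def kk : ℝ × ℝ → ℝ := fun p => ∫ y, FF g (p.1, y) * FF g (p.2, y) ∂mI
noncomputable def DD : ℝ := ∫ x, dd g x * dd g x ∂mI
noncomputable def SS : ℝ := ∫ p, FF g p * FF g p ∂mII
noncomputable def TT : ℝ := ∫ p, FF g p * kk g (p.2, p.1) ∂mII

variable {g}
variable (hgm : Measurable (Function.uncurry g))
    (hsym : ∀ x ∈ Icc (0:ℝ) 1, ∀ y ∈ Icc (0:ℝ) 1, g x y = g y x)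
    (hmem : ∀ x ∈ Icc (0:ℝ) 1, ∀ y ∈ Icc (0:ℝ) 1, g x y ∈ Icc (0:ℝ) 1)

include hgm in
lemma FF_meas : Measurable (FF g) := by
  have : Measurable fun p : ℝ × ℝ => g p.1 p.2 := hgm
  exact this.sub measurable_const

include hgm hmem in
lemma FF_bd : ∀ᵐ p ∂mII, |FF g p| ≤ 1/2 := by
  filter_upwards [mem_ae_mII] with p hp
  obtain ⟨h0, h1⟩ := hmem p.1 hp.1 p.2 hp.2
  rw [FF, abs_le]; constructor <;> [linarith; linarith]

include hgm in
lemma dd_meas : StronglyMeasurable (dd g) :=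
  (FF_meas hgm).stronglyMeasurable.integral_prod_right'

include hgm in
lemma rr_meas : StronglyMeasurable (rr g) :=
  StronglyMeasurable.integral_prod_right'
    (f := fun q : ℝ × ℝ => FF g q * FF g q)
    ((FF_meas hgm).mul (FF_meas hgm)).stronglyMeasurable

include hgm in
lemma kk_meas : StronglyMeasurable (kk g) :=
  StronglyMeasurable.integral_prod_right'
    (f := fun q : (ℝ × ℝ) × ℝ => FF g (q.1.1, q.2) * FF g (q.1.2, q.2))
    (((FF_meas hgm).comp (measurable_fst.fst.prodMk measurable_snd)).mul
      ((FF_meas hgm).comp (measurable_fst.snd.prodMk measurable_snd))).stronglyMeasurable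

-- pointwise bounds for sections, for x, z ∈ Icc
include hmem in
lemma FF_sect_bd {x : ℝ} (hx : x ∈ Icc (0:ℝ) 1) :
    ∀ᵐ y ∂mI, |FF g (x, y)| ≤ 1/2 := by
  filter_upwards [mem_ae_mI] with y hy
  obtain ⟨h0, h1⟩ := hmem x hx y hy
  rw [FF, abs_le]; constructor <;> [simp; skip] <;> [linarith; (simp; linarith)]

include hgm in
lemma FF_sect_meas (x : ℝ) : Measurable (fun y => FF g (x, y)) :=
  (FF_meas hgm).comp (measurable_const.prodMk measurable_id)

include hgm hmem in
lemma FF_sect_int {x : ℝ} (hx : x ∈ Icc (0:ℝ) 1) :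
    Integrable (fun y => FF g (x, y)) mI :=
  integrable_of_bdd (FF_sect_meas hgm x).aestronglyMeasurable (FF_sect_bd hmem hx)

include hgm hmem in
lemma dd_bd : ∀ᵐ x ∂mI, |dd g x| ≤ 1/2 := by
  filter_upwards [mem_ae_mI] with x hx
  have := norm_integral_le_of_norm_le_const (μ := mI)
    (f := fun y => FF g (x, y)) (C := 1/2) ?_
  · simpa [dd, Real.norm_eq_abs] using this
  · filter_upwards [FF_sect_bd hmem hx] with y hy
    simpa [Real.norm_eq_abs] using hy

include hgm hmem in
lemma kk_bd : ∀ᵐ p ∂mII, |kk g p| ≤ 1/4 := by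
  filter_upwards [mem_ae_mII] with p hp
  have := norm_integral_le_of_norm_le_const (μ := mI)
    (f := fun y => FF g (p.1, y) * FF g (p.2, y)) (C := 1/4) ?_
  · simpa [kk, Real.norm_eq_abs] using this
  · filter_upwards [FF_sect_bd hmem hp.1, FF_sect_bd hmem hp.2] with y h1 h2
    rw [Real.norm_eq_abs, abs_mul]
    calc |FF g (p.1, y)| * |FF g (p.2, y)| ≤ (1/2) * (1/2) :=
          mul_le_mul h1 h2 (abs_nonneg _) (by norm_num)
      _ = 1/4 := by norm_num

include hgm hmem in
lemma rr_bd : ∀ᵐ x ∂mI, |rr g x| ≤ 1/4 := by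
  filter_upwards [mem_ae_mI] with x hx
  have := norm_integral_le_of_norm_le_const (μ := mI)
    (f := fun y => FF g (x, y) * FF g (x, y)) (C := 1/4) ?_
  · simpa [rr, Real.norm_eq_abs] using this
  · filter_upwards [FF_sect_bd hmem hx] with y h1
    rw [Real.norm_eq_abs, abs_mul]
    calc |FF g (x, y)| * |FF g (x, y)| ≤ (1/2) * (1/2) :=
          mul_le_mul h1 h1 (abs_nonneg _) (by norm_num)
      _ = 1/4 := by norm_num

include hgm hmem in
lemma FF_int : Integrable (FF g) mII :=
  integrable_of_bdd (FF_meas hgm).aestronglyMeasurable (FF_bd hgm hmem)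



/-- Edge density as `mI`-iterated integral (definitional). -/
lemma edge_repr : edgeDensity g = ∫ x, ∫ y, g x y ∂mI ∂mI := rfl

lemma tri_repr : triangleDensity g = ∫ x, ∫ y, ∫ z, g x y * g y z * g z x ∂mI ∂mI ∂mI := rfl

lemma rate_repr : rateFn g = ∫ x, ∫ y, I0 (g x y) ∂mI ∂mI := rfl

include hgm hmem in
lemma FF_sect_mul_int {x z : ℝ} (hx : x ∈ Icc (0:ℝ) 1) (hz : z ∈ Icc (0:ℝ) 1) :
    Integrable (fun y => FF g (x, y) * FF g (z, y)) mI := by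
  apply integrable_of_bdd (C := 1/4)
  · exact ((FF_sect_meas hgm x).mul (FF_sect_meas hgm z)).aestronglyMeasurable
  · filter_upwards [FF_sect_bd hmem hx, FF_sect_bd hmem hz] with y h1 h2
    rw [abs_mul]
    calc |FF g (x, y)| * |FF g (z, y)| ≤ (1/2) * (1/2) :=
        mul_le_mul h1 h2 (abs_nonneg _) (by norm_num)
      _ = 1/4 := by norm_num

include hgm hmem in
lemma gg_int : Integrable (fun p : ℝ × ℝ => g p.1 p.2) mII := by
  apply integrable_of_bdd (C := 1) hgm.aestronglyMeasurable
  filter_upwards [mem_ae_mII] with p hp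
  obtain ⟨h0, h1⟩ := hmem p.1 hp.1 p.2 hp.2
  rw [abs_le]; constructor <;> simp only [Function.uncurry_apply_pair, Function.uncurry] <;> linarith

include hgm hmem in
lemma edge_F (he : edgeDensity g = 1/2) : ∫ p, FF g p ∂mII = 0 := by
  have h1 : (fun p : ℝ × ℝ => FF g p) = fun p => g p.1 p.2 - 1/2 := rfl
  rw [h1, integral_sub (gg_int hgm hmem) (integrable_const _), integral_const]
  have h2 : ∫ p, g p.1 p.2 ∂mII = edgeDensity g :=
    (integral_integral (f := fun x y => g x y) (gg_int hgm hmem)).symm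
  rw [h2, he]
  simp

include hgm hmem in
lemma dd_int : Integrable (dd g) mI :=
  integrable_of_bdd (dd_meas hgm).measurable.aestronglyMeasurable (dd_bd hgm hmem)

include hgm hmem in
lemma dd_sq_int : Integrable (fun x => dd g x * dd g x) mI := by
  apply integrable_of_bdd (C := 1/4)
  · exact ((dd_meas hgm).measurable.mul (dd_meas hgm).measurable).aestronglyMeasurable
  · filter_upwards [dd_bd hgm hmem] with x hx
    rw [abs_mul]
    calc |dd g x| * |dd g x| ≤ (1/2) * (1/2) :=
        mul_le_mul hx hx (abs_nonneg _) (by norm_num)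
      _ = 1/4 := by norm_num

include hgm hmem in
lemma dd0 (he : edgeDensity g = 1/2) : ∫ x, dd g x ∂mI = 0 := by
  have h1 : ∫ x, dd g x ∂mI = ∫ p, FF g p ∂mII := by
    have := integral_integral (f := fun x y => FF g (x, y)) (FF_int hgm hmem)
    exact this
  rw [h1, edge_F hgm hmem he]

include hgm hsym in
lemma col_sum : ∀ᵐ z ∂mI, (∫ y, FF g (y, z) ∂mI) = dd g z := by
  filter_upwards [mem_ae_mI] with z hz
  apply integral_congr_ae
  filter_upwards [mem_ae_mI] with y hy
  show FF g (y, z) = FF g (z, y)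
  simp only [FF]
  rw [hsym y hy z hz]

include hgm hmem in
lemma kk_swap_meas : Measurable (fun p : ℝ × ℝ => kk g (p.2, p.1)) :=
  (kk_meas hgm).measurable.comp (measurable_snd.prodMk measurable_fst)

include hgm hmem in
lemma kk_swap_bd : ∀ᵐ p ∂mII, |kk g (p.2, p.1)| ≤ 1/4 := by
  have hswap : MeasurePreserving Prod.swap mII mII := by
    rw [mII_def]; exact Measure.measurePreserving_swap
  exact hswap.quasiMeasurePreserving.ae (kk_bd hgm hmem)

include hgm hmem in
lemma kk_swap_int : Integrable (fun p : ℝ × ℝ => kk g (p.2, p.1)) mII :=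
  integrable_of_bdd (kk_swap_meas hgm hmem).aestronglyMeasurable (kk_swap_bd hgm hmem)

include hgm hmem in
lemma dd_fst_bd : ∀ᵐ p ∂mII, |dd g p.1| ≤ 1/2 := by
  have h : Measure.QuasiMeasurePreserving (Prod.fst : ℝ × ℝ → ℝ) mII mI := by
    rw [mII_def]; exact Measure.quasiMeasurePreserving_fst
  exact h.ae (dd_bd hgm hmem)

include hgm hmem in
lemma dd_snd_bd : ∀ᵐ p ∂mII, |dd g p.2| ≤ 1/2 := by
  have h : Measure.QuasiMeasurePreserving (Prod.snd : ℝ × ℝ → ℝ) mII mI := by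
    rw [mII_def]; exact Measure.quasiMeasurePreserving_snd
  exact h.ae (dd_bd hgm hmem)

/-- integral over `mII` of a function of the first coordinate -/
lemma int_fst {u : ℝ → ℝ} (hu : Integrable (fun p : ℝ × ℝ => u p.1) mII) :
    ∫ p, u p.1 ∂mII = ∫ x, u x ∂mI := by
  rw [mII_def] at hu ⊢
  rw [integral_prod _ hu]
  simp [integral_const]

lemma int_snd {u : ℝ → ℝ} (hu : Integrable (fun p : ℝ × ℝ => u p.2) mII) :
    ∫ p, u p.2 ∂mII = ∫ x, u x ∂mI := by
  rw [mII_def] at hu ⊢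
  rw [integral_prod _ hu]
  simp [integral_const]

include hgm hmem in
lemma int_F_dd_fst : ∫ p, FF g p * dd g p.1 ∂mII = DD g := by
  have hint : Integrable (fun p : ℝ × ℝ => FF g p * dd g p.1) mII := by
    apply integrable_of_bdd (C := 1/4)
    · exact ((FF_meas hgm).mul
        ((dd_meas hgm).measurable.comp measurable_fst)).aestronglyMeasurable
    · filter_upwards [FF_bd hgm hmem, dd_fst_bd hgm hmem] with p h1 h2
      rw [abs_mul]
      calc |FF g p| * |dd g p.1| ≤ (1/2) * (1/2) :=
          mul_le_mul h1 h2 (abs_nonneg _) (by norm_num)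
        _ = 1/4 := by norm_num
  rw [mII_def] at hint
  have h1 : ∫ p, FF g p * dd g p.1 ∂mII = ∫ x, ∫ y, FF g (x, y) * dd g x ∂mI ∂mI := by
    rw [mII_def]; exact integral_prod _ hint
  rw [h1]
  have h2 : ∀ x : ℝ, ∫ y, FF g (x, y) * dd g x ∂mI = dd g x * dd g x := by
    intro x
    rw [integral_mul_const]
    rfl
  rw [integral_congr_ae (Filter.Eventually.of_forall h2)]
  rfl

include hgm hmem hsym in
lemma int_F_dd_snd : ∫ p, FF g p * dd g p.2 ∂mII = DD g := by
  have hint : Integrable (Function.uncurry fun x y => FF g (x, y) * dd g y) mII := by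
    apply integrable_of_bdd (C := 1/4)
    · exact ((FF_meas hgm).mul
        ((dd_meas hgm).measurable.comp measurable_snd)).aestronglyMeasurable
    · filter_upwards [FF_bd hgm hmem, dd_snd_bd hgm hmem] with p h1 h2
      rw [Function.uncurry_apply_pair, abs_mul]
      calc |FF g (p.1, p.2)| * |dd g p.2| ≤ (1/2) * (1/2) :=
          mul_le_mul (by simpa using h1) h2 (abs_nonneg _) (by norm_num)
        _ = 1/4 := by norm_num
  have h1 : ∫ p, FF g p * dd g p.2 ∂mII = ∫ x, ∫ y, FF g (x, y) * dd g y ∂mI ∂mI := by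
    rw [mII_def]
    rw [mII_def] at hint
    exact integral_prod _ hint
  rw [h1, integral_integral_swap (by rwa [← mII_def])]
  have h2 : ∀ y : ℝ, ∫ x, FF g (x, y) * dd g y ∂mI = (∫ x, FF g (x, y) ∂mI) * dd g y :=
    fun y => integral_mul_const _ _
  rw [integral_congr_ae (Filter.Eventually.of_forall h2)]
  have h3 : ∀ᵐ y ∂mI, (∫ x, FF g (x, y) ∂mI) * dd g y = dd g y * dd g y := by
    filter_upwards [col_sum hgm hsym] with y hy
    rw [hy]
  rw [integral_congr_ae h3]
  rfl

include hgm hmem hsym in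
lemma int_kk_swap : ∫ p, kk g (p.2, p.1) ∂mII = DD g := by
  have hint := kk_swap_int hgm hmem
  have h1 : ∫ p, kk g (p.2, p.1) ∂mII = ∫ x, ∫ y, kk g (y, x) ∂mI ∂mI := by
    rw [mII_def]
    rw [mII_def] at hint
    exact integral_prod _ hint
  rw [h1]
  -- middle function
  have key : ∀ᵐ x ∂mI, ∫ y, kk g (y, x) ∂mI = ∫ z, dd g z * FF g (x, z) ∂mI := by
    filter_upwards [mem_ae_mI] with x hx
    have e0 : ∫ y, kk g (y, x) ∂mI = ∫ y, ∫ z, FF g (y, z) * FF g (x, z) ∂mI ∂mI := rfl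
    rw [e0]
    have hint2 : Integrable (Function.uncurry fun y z => FF g (y, z) * FF g (x, z)) mII := by
      apply integrable_of_bdd (C := 1/4)
      · exact ((FF_meas hgm).mul ((FF_sect_meas hgm x).comp measurable_snd)).aestronglyMeasurable
      · filter_upwards [FF_bd hgm hmem, mem_ae_mII] with p h1 h2
        rw [Function.uncurry_apply_pair, abs_mul]
        have hb2 : |FF g (x, p.2)| ≤ 1/2 := by
          obtain ⟨u0, u1⟩ := hmem x hx p.2 h2.2
          rw [FF, abs_le]; constructor <;> simp only <;> linarith
        calc |FF g (p.1, p.2)| * |FF g (x, p.2)| ≤ (1/2) * (1/2) :=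
            mul_le_mul (by simpa using h1) hb2 (abs_nonneg _) (by norm_num)
          _ = 1/4 := by norm_num
    rw [integral_integral_swap (by rwa [← mII_def])]
    apply integral_congr_ae
    filter_upwards [col_sum hgm hsym] with z hz
    rw [integral_mul_const, hz]
  rw [integral_congr_ae key]
  -- final swap
  have hint3 : Integrable (Function.uncurry fun x z => dd g z * FF g (x, z)) mII := by
    apply integrable_of_bdd (C := 1/4)
    · exact (((dd_meas hgm).measurable.comp measurable_snd).mul
        (FF_meas hgm)).aestronglyMeasurable
    · filter_upwards [FF_bd hgm hmem, dd_snd_bd hgm hmem] with p h1 h2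
      rw [Function.uncurry_apply_pair, abs_mul]
      calc |dd g p.2| * |FF g (p.1, p.2)| ≤ (1/2) * (1/2) :=
          mul_le_mul h2 (by simpa using h1) (abs_nonneg _) (by norm_num)
        _ = 1/4 := by norm_num
  rw [integral_integral_swap (by rwa [← mII_def])]
  have h4 : ∀ z : ℝ, ∫ x, dd g z * FF g (x, z) ∂mI = dd g z * ∫ x, FF g (x, z) ∂mI :=
    fun z => integral_const_mul _ _
  rw [integral_congr_ae (Filter.Eventually.of_forall h4)]
  have h5 : ∀ᵐ z ∂mI, dd g z * ∫ x, FF g (x, z) ∂mI = dd g z * dd g z := by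
    filter_upwards [col_sum hgm hsym] with z hz
    rw [hz]
  rw [integral_congr_ae h5]
  rfl

include hgm hmem in
lemma DD_nonneg : 0 ≤ DD g := integral_nonneg fun x => mul_self_nonneg _

include hgm hmem hsym in
lemma triangle_identity (he : edgeDensity g = 1/2) :
    triangleDensity g = 1/8 + (3/2) * DD g + TT g := by
  have hFm := FF_meas hgm
  -- inner z-expansion
  have hinner : ∀ᵐ x ∂mI, ∀ᵐ y ∂mI,
      ∫ z, g x y * g y z * g z x ∂mI
        = g x y * (1/4 + dd g x / 2 + dd g y / 2 + kk g (y, x)) := by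
    filter_upwards [mem_ae_mI] with x hx
    filter_upwards [mem_ae_mI] with y hy
    have e1 : ∫ z, g x y * g y z * g z x ∂mI = g x y * ∫ z, g y z * g z x ∂mI := by
      simp_rw [mul_assoc]
      exact integral_const_mul _ _
    rw [e1]
    congr 1
    have e2 : ∀ᵐ z ∂mI, g y z * g z x
        = 1/4 + (1/2) * FF g (x, z) + ((1/2) * FF g (y, z)
            + FF g (y, z) * FF g (x, z)) := by
      filter_upwards [mem_ae_mI] with z hz
      rw [hsym z hz x hx]
      simp only [FF]
      ring
    rw [integral_congr_ae e2]
    have i2 : Integrable (fun z => (1/2) * FF g (x, z)) mI :=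
      (FF_sect_int hgm hmem hx).const_mul _
    have i3 : Integrable (fun z => (1/2) * FF g (y, z)) mI :=
      (FF_sect_int hgm hmem hy).const_mul _
    have i4 : Integrable (fun z => FF g (y, z) * FF g (x, z)) mI :=
      FF_sect_mul_int hgm hmem hy hx
    have i1 : Integrable (fun _ : ℝ => (1/4 : ℝ)) mI := integrable_const _
    have i12 : Integrable (fun z => (1/4 : ℝ) + (1/2) * FF g (x, z)) mI := i1.add i2
    have i34 : Integrable (fun z => (1/2) * FF g (y, z) + FF g (y, z) * FF g (x, z)) mI :=
      i3.add i4
    rw [integral_add i12 i34, integral_add i1 i2, integral_add i3 i4,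
      integral_const, integral_const_mul, integral_const_mul]
    have hdx : ∫ z, FF g (x, z) ∂mI = dd g x := rfl
    have hdy : ∫ z, FF g (y, z) ∂mI = dd g y := rfl
    have hkk : ∫ z, FF g (y, z) * FF g (x, z) ∂mI = kk g (y, x) := rfl
    rw [hdx, hdy, hkk]
    simp only [measure_univ, ENNReal.toReal_one, probReal_univ, smul_eq_mul, one_mul]
    ring
  -- triangle density as a double integral
  have step1 : triangleDensity g
      = ∫ x, ∫ y, g x y * (1/4 + dd g x / 2 + dd g y / 2 + kk g (y, x)) ∂mI ∂mI := by
    rw [tri_repr]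
    apply integral_congr_ae
    filter_upwards [hinner] with x hxin
    exact integral_congr_ae hxin
  -- as an mII integral
  have KKm : Measurable (fun p : ℝ × ℝ =>
      1/4 + dd g p.1 / 2 + dd g p.2 / 2 + kk g (p.2, p.1)) := by
    apply Measurable.add
    apply Measurable.add
    apply Measurable.add measurable_const
    · exact ((dd_meas hgm).measurable.comp measurable_fst).div_const 2
    · exact ((dd_meas hgm).measurable.comp measurable_snd).div_const 2
    · exact kk_swap_meas hgm hmem
  have hgKK_int : Integrable (Function.uncurry fun x y =>
      g x y * (1/4 + dd g x / 2 + dd g y / 2 + kk g (y, x))) mII := by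
    apply integrable_of_bdd (C := 1 * (1/4 + 1/4 + 1/4 + 1/4))
    · exact (hgm.mul KKm).aestronglyMeasurable
    · filter_upwards [mem_ae_mII, dd_fst_bd hgm hmem, dd_snd_bd hgm hmem,
        kk_swap_bd hgm hmem] with p hp b1 b2 b3
      obtain ⟨u0, u1⟩ := hmem p.1 hp.1 p.2 hp.2
      rw [Function.uncurry_apply_pair, abs_mul]
      have h1 : |g p.1 p.2| ≤ 1 := by rw [abs_le]; constructor <;> linarith
      have h2 : |1/4 + dd g p.1 / 2 + dd g p.2 / 2 + kk g (p.2, p.1)| ≤ 1/4 + 1/4 + 1/4 + 1/4 := by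
        have a1 := abs_le.1 b1
        have a2 := abs_le.1 b2
        have a3 := abs_le.1 b3
        rw [abs_le]
        constructor <;> linarith [a1.1, a1.2, a2.1, a2.2, a3.1, a3.2]
      exact mul_le_mul h1 h2 (abs_nonneg _) (by norm_num)
  have step2 : triangleDensity g = ∫ p, g p.1 p.2
      * (1/4 + dd g p.1 / 2 + dd g p.2 / 2 + kk g (p.2, p.1)) ∂mII := by
    rw [step1]
    exact integral_integral hgKK_int
  -- expand into eight integrals
  have expand : (fun p : ℝ × ℝ => g p.1 p.2
      * (1/4 + dd g p.1 / 2 + dd g p.2 / 2 + kk g (p.2, p.1)))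
      = fun p => (1/8 : ℝ) + ((1/4) * dd g p.1 + ((1/4) * dd g p.2 + ((1/2) * kk g (p.2, p.1)
          + ((1/4) * FF g p + ((1/2) * (FF g p * dd g p.1) + ((1/2) * (FF g p * dd g p.2)
          + FF g p * kk g (p.2, p.1))))))) := by
    funext p
    simp only [FF]
    ring
  have iC : Integrable (fun _ : ℝ × ℝ => (1/8:ℝ)) mII := integrable_const _
  have idd1 : Integrable (fun p : ℝ × ℝ => dd g p.1) mII :=
    integrable_of_bdd ((dd_meas hgm).measurable.comp measurable_fst).aestronglyMeasurable
      (dd_fst_bd hgm hmem)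
  have idd2 : Integrable (fun p : ℝ × ℝ => dd g p.2) mII :=
    integrable_of_bdd ((dd_meas hgm).measurable.comp measurable_snd).aestronglyMeasurable
      (dd_snd_bd hgm hmem)
  have ikk := kk_swap_int hgm hmem
  have iF := FF_int hgm hmem
  have prod_bd : ∀ {u : ℝ × ℝ → ℝ}, Measurable u → (∀ᵐ p ∂mII, |u p| ≤ 1/2) →
      Integrable (fun p => FF g p * u p) mII := by
    intro u hum hub
    apply integrable_of_bdd (C := 1/4) ((hFm.mul hum).aestronglyMeasurable)
    filter_upwards [FF_bd hgm hmem, hub] with p h1 h2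
    rw [Pi.mul_apply, abs_mul]
    calc |FF g p| * |u p| ≤ (1/2) * (1/2) :=
        mul_le_mul h1 h2 (abs_nonneg _) (by norm_num)
      _ = 1/4 := by norm_num
  have iFd1 : Integrable (fun p : ℝ × ℝ => FF g p * dd g p.1) mII :=
    prod_bd ((dd_meas hgm).measurable.comp measurable_fst) (dd_fst_bd hgm hmem)
  have iFd2 : Integrable (fun p : ℝ × ℝ => FF g p * dd g p.2) mII :=
    prod_bd ((dd_meas hgm).measurable.comp measurable_snd) (dd_snd_bd hgm hmem)
  have iFkk : Integrable (fun p : ℝ × ℝ => FF g p * kk g (p.2, p.1)) mII := by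
    apply prod_bd (kk_swap_meas hgm hmem)
    filter_upwards [kk_swap_bd hgm hmem] with p hp
    linarith [hp]
  rw [step2, expand]
  have s7 : Integrable (fun p : ℝ × ℝ => (1/2) * (FF g p * dd g p.2)
      + FF g p * kk g (p.2, p.1)) mII := (iFd2.const_mul _).add iFkk
  have s6 : Integrable (fun p : ℝ × ℝ => (1/2) * (FF g p * dd g p.1)
      + ((1/2) * (FF g p * dd g p.2) + FF g p * kk g (p.2, p.1))) mII :=
    (iFd1.const_mul _).add s7
  have s5 : Integrable (fun p : ℝ × ℝ => (1/4) * FF g p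
      + ((1/2) * (FF g p * dd g p.1) + ((1/2) * (FF g p * dd g p.2)
        + FF g p * kk g (p.2, p.1)))) mII := (iF.const_mul _).add s6
  have s4 : Integrable (fun p : ℝ × ℝ => (1/2) * kk g (p.2, p.1) + ((1/4) * FF g p
      + ((1/2) * (FF g p * dd g p.1) + ((1/2) * (FF g p * dd g p.2)
        + FF g p * kk g (p.2, p.1))))) mII := (ikk.const_mul _).add s5
  have s3 : Integrable (fun p : ℝ × ℝ => (1/4) * dd g p.2 + ((1/2) * kk g (p.2, p.1)
      + ((1/4) * FF g p + ((1/2) * (FF g p * dd g p.1) + ((1/2) * (FF g p * dd g p.2)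
        + FF g p * kk g (p.2, p.1)))))) mII := (idd2.const_mul _).add s4
  have s2 : Integrable (fun p : ℝ × ℝ => (1/4) * dd g p.1 + ((1/4) * dd g p.2
      + ((1/2) * kk g (p.2, p.1) + ((1/4) * FF g p + ((1/2) * (FF g p * dd g p.1)
        + ((1/2) * (FF g p * dd g p.2) + FF g p * kk g (p.2, p.1))))))) mII :=
    (idd1.const_mul _).add s3
  rw [integral_add iC s2, integral_add (idd1.const_mul _) s3,
    integral_add (idd2.const_mul _) s4, integral_add (ikk.const_mul _) s5,
    integral_add (iF.const_mul _) s6, integral_add (iFd1.const_mul _) s7,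
    integral_add (iFd2.const_mul _) iFkk]
  rw [integral_const_mul, integral_const_mul, integral_const_mul, integral_const_mul,
    integral_const_mul, integral_const_mul]
  rw [int_fst idd1, int_snd idd2, dd0 hgm hmem he, int_kk_swap hgm hsym hmem,
    edge_F hgm hmem he, int_F_dd_fst hgm hmem, int_F_dd_snd hgm hsym hmem]
  have hTT : ∫ p, FF g p * kk g (p.2, p.1) ∂mII = TT g := rfl
  rw [hTT, integral_const]
  simp only [measure_univ, ENNReal.toReal_one, probReal_univ, smul_eq_mul, one_mul]
  ring

include hgm hmem in
lemma FF_sq_int : Integrable (fun p : ℝ × ℝ => FF g p * FF g p) mII := by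
  apply integrable_of_bdd (C := 1/4) ((FF_meas hgm).mul (FF_meas hgm)).aestronglyMeasurable
  filter_upwards [FF_bd hgm hmem] with p h1
  rw [Pi.mul_apply, abs_mul]
  calc |FF g p| * |FF g p| ≤ (1/2) * (1/2) := mul_le_mul h1 h1 (abs_nonneg _) (by norm_num)
    _ = 1/4 := by norm_num

include hgm hmem in
lemma FF_kk_int : Integrable (fun p : ℝ × ℝ => FF g p * kk g (p.2, p.1)) mII := by
  apply integrable_of_bdd (C := 1/4)
    ((FF_meas hgm).mul (kk_swap_meas hgm hmem)).aestronglyMeasurable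
  filter_upwards [FF_bd hgm hmem, kk_swap_bd hgm hmem] with p h1 h2
  rw [Pi.mul_apply, abs_mul]
  calc |FF g p| * |kk g (p.2, p.1)| ≤ (1/2) * (1/4) :=
      mul_le_mul h1 h2 (abs_nonneg _) (by norm_num)
    _ ≤ 1/4 := by norm_num

include hgm hmem in
lemma kk_sq_int : Integrable (fun p : ℝ × ℝ => kk g (p.2, p.1) * kk g (p.2, p.1)) mII := by
  apply integrable_of_bdd (C := 1/16)
    ((kk_swap_meas hgm hmem).mul (kk_swap_meas hgm hmem)).aestronglyMeasurable
  filter_upwards [kk_swap_bd hgm hmem] with p h1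
  rw [Pi.mul_apply, abs_mul]
  calc |kk g (p.2, p.1)| * |kk g (p.2, p.1)| ≤ (1/4) * (1/4) :=
      mul_le_mul h1 h1 (abs_nonneg _) (by norm_num)
    _ = 1/16 := by norm_num

include hgm hmem in
lemma rr_int : Integrable (rr g) mI :=
  integrable_of_bdd (rr_meas hgm).measurable.aestronglyMeasurable (rr_bd hgm hmem)

include hgm hmem in
lemma rr_prod_int : Integrable (fun p : ℝ × ℝ => rr g p.2 * rr g p.1) mII := by
  have h : ∀ᵐ p ∂mII, |rr g p.1| ≤ 1/4 := by
    have h : Measure.QuasiMeasurePreserving (Prod.fst : ℝ × ℝ → ℝ) mII mI := by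
      rw [mII_def]; exact Measure.quasiMeasurePreserving_fst
    exact h.ae (rr_bd hgm hmem)
  have h2 : ∀ᵐ p ∂mII, |rr g p.2| ≤ 1/4 := by
    have h : Measure.QuasiMeasurePreserving (Prod.snd : ℝ × ℝ → ℝ) mII mI := by
      rw [mII_def]; exact Measure.quasiMeasurePreserving_snd
    exact h.ae (rr_bd hgm hmem)
  apply integrable_of_bdd (C := 1/16)
    (((rr_meas hgm).measurable.comp measurable_snd).mul
      ((rr_meas hgm).measurable.comp measurable_fst)).aestronglyMeasurable
  filter_upwards [h, h2] with p h1' h2'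
  rw [Pi.mul_apply, abs_mul]
  calc |rr g p.2| * |rr g p.1| ≤ (1/4) * (1/4) :=
      mul_le_mul h2' h1' (abs_nonneg _) (by norm_num)
    _ = 1/16 := by norm_num

include hgm hmem in
lemma SS_eq_rr : SS g = ∫ x, rr g x ∂mI :=
  (integral_integral (f := fun x y => FF g (x, y) * FF g (x, y)) (FF_sq_int hgm hmem)).symm

include hgm hmem in
lemma SS_nonneg : 0 ≤ SS g := integral_nonneg fun p => mul_self_nonneg _

include hgm hmem in
lemma SS_le : SS g ≤ 1/4 := by
  have h : ∀ᵐ p ∂mII, FF g p * FF g p ≤ 1/4 := by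
    filter_upwards [FF_bd hgm hmem] with p hp
    have := abs_le.1 hp
    nlinarith [this.1, this.2]
  calc SS g ≤ ∫ _p, (1/4 : ℝ) ∂mII :=
      integral_mono_ae (FF_sq_int hgm hmem) (integrable_const _) h
    _ = 1/4 := by simp

include hgm hsym hmem in
lemma TT_sq_le : TT g ^ 2 ≤ SS g ^ 3 := by
  have c1 := cs_integral mII (FF g) (fun p => kk g (p.2, p.1))
    (FF_kk_int hgm hmem) (FF_sq_int hgm hmem) (kk_sq_int hgm hmem)
  -- pointwise bound for the kernel square
  have c2 : ∀ᵐ p ∂mII, kk g (p.2, p.1) * kk g (p.2, p.1) ≤ rr g p.2 * rr g p.1 := by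
    filter_upwards [mem_ae_mII] with p hp
    have := cs_integral mI (fun y => FF g (p.2, y)) (fun y => FF g (p.1, y))
      (FF_sect_mul_int hgm hmem hp.2 hp.1) (FF_sect_mul_int hgm hmem hp.2 hp.2)
      (FF_sect_mul_int hgm hmem hp.1 hp.1)
    have e1 : kk g (p.2, p.1) = ∫ y, FF g (p.2, y) * FF g (p.1, y) ∂mI := rfl
    have e2 : rr g p.2 = ∫ y, FF g (p.2, y) * FF g (p.2, y) ∂mI := rfl
    have e3 : rr g p.1 = ∫ y, FF g (p.1, y) * FF g (p.1, y) ∂mI := rfl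
    rw [e1, e2, e3]
    nlinarith [this]
  have c3 : ∫ p, kk g (p.2, p.1) * kk g (p.2, p.1) ∂mII ≤ ∫ p, rr g p.2 * rr g p.1 ∂mII :=
    integral_mono_ae (kk_sq_int hgm hmem) (rr_prod_int hgm hmem) c2
  have c4 : ∫ p, rr g p.2 * rr g p.1 ∂mII = SS g * SS g := by
    have e : (fun p : ℝ × ℝ => rr g p.2 * rr g p.1) = fun p => rr g p.1 * rr g p.2 := by
      funext p; ring
    rw [e]
    rw [mII_def]
    rw [integral_prod_mul (f := rr g) (g := rr g)]
    rw [SS_eq_rr hgm hmem]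
  have hSnn := SS_nonneg hgm hmem
  have hQnn : 0 ≤ ∫ p, kk g (p.2, p.1) * kk g (p.2, p.1) ∂mII :=
    integral_nonneg fun p => mul_self_nonneg _
  have c1' : TT g ^ 2 ≤ SS g * ∫ p, kk g (p.2, p.1) * kk g (p.2, p.1) ∂mII := c1
  calc TT g ^ 2 ≤ SS g * ∫ p, kk g (p.2, p.1) * kk g (p.2, p.1) ∂mII := c1'
    _ ≤ SS g * (SS g * SS g) := mul_le_mul_of_nonneg_left (c4 ▸ c3) hSnn
    _ = SS g ^ 3 := by ring

include hgm hmem in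
lemma I0_int : Integrable (fun p : ℝ × ℝ => I0 (g p.1 p.2)) mII := by
  obtain ⟨C, hC⟩ := (isCompact_Icc (a := (0:ℝ)) (b := 1)).exists_bound_of_continuousOn
    continuous_I0.continuousOn
  apply integrable_of_bdd (C := C)
    ((continuous_I0.measurable.comp hgm).aestronglyMeasurable)
  filter_upwards [mem_ae_mII] with p hp
  exact hC _ (hmem p.1 hp.1 p.2 hp.2)

include hgm hmem in
lemma rate_F : rateFn g = ∫ p, I0 (g p.1 p.2) ∂mII := by
  rw [rate_repr]
  exact integral_integral (f := fun x y => I0 (g x y)) (I0_int hgm hmem)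

lemma mp_fst : MeasurePreserving (Prod.fst : ℝ × ℝ → ℝ) mII mI := by
  refine ⟨measurable_fst, ?_⟩
  rw [mII_def]
  simp [Measure.map_fst_prod]

lemma mp_snd : MeasurePreserving (Prod.snd : ℝ × ℝ → ℝ) mII mI := by
  refine ⟨measurable_snd, ?_⟩
  rw [mII_def]
  simp [Measure.map_snd_prod]

lemma mp_snd3 : MeasurePreserving (Prod.snd : ℝ × (ℝ × ℝ) → ℝ × ℝ) (mI.prod mII) mII := by
  refine ⟨measurable_snd, ?_⟩
  simp [Measure.map_snd_prod]

lemma mp12 : MeasurePreserving (Prod.map id (Prod.fst : ℝ × ℝ → ℝ)) (mI.prod mII) mII := by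
  rw [mII_def]
  exact (MeasurePreserving.id mI).prod (by rw [← mII_def]; exact mp_fst)

lemma mp31 : MeasurePreserving
    ((Prod.swap : ℝ × ℝ → ℝ × ℝ) ∘ Prod.map id (Prod.snd : ℝ × ℝ → ℝ))
    (mI.prod mII) mII := by
  have h1 : MeasurePreserving (Prod.map id (Prod.snd : ℝ × ℝ → ℝ)) (mI.prod mII) mII := by
    rw [mII_def]
    exact (MeasurePreserving.id mI).prod (by rw [← mII_def]; exact mp_snd)
  have h2 : MeasurePreserving (Prod.swap : ℝ × ℝ → ℝ × ℝ) mII mII := by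
    rw [mII_def]; exact Measure.measurePreserving_swap
  exact h2.comp h1

/-- the cyclic-style reorder `(z,(x,y)) ↦ (x,(y,z))`. -/
lemma mpT : MeasurePreserving
    ((MeasurableEquiv.prodAssoc : (ℝ × ℝ) × ℝ ≃ᵐ ℝ × (ℝ × ℝ)) ∘ Prod.swap)
    (mI.prod mII) (mI.prod mII) := by
  have h1 : MeasurePreserving (Prod.swap : ℝ × (ℝ × ℝ) → (ℝ × ℝ) × ℝ)
      (mI.prod mII) (mII.prod mI) := Measure.measurePreserving_swap
  have h2 : MeasurePreserving
      (MeasurableEquiv.prodAssoc : (ℝ × ℝ) × ℝ ≃ᵐ ℝ × (ℝ × ℝ))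
      (mII.prod mI) (mI.prod mII) := by
    refine ⟨MeasurableEquiv.prodAssoc.measurable, ?_⟩
    rw [mII_def]
    exact Measure.prodAssoc_prod
  exact h2.comp h1

lemma mem_ae_mIII : ∀ᵐ r : ℝ × (ℝ × ℝ) ∂(mI.prod mII),
    r.1 ∈ Icc (0:ℝ) 1 ∧ r.2.1 ∈ Icc (0:ℝ) 1 ∧ r.2.2 ∈ Icc (0:ℝ) 1 := by
  have h1 : ∀ᵐ r : ℝ × (ℝ × ℝ) ∂(mI.prod mII), r.1 ∈ Icc (0:ℝ) 1 :=
    Measure.quasiMeasurePreserving_fst.ae mem_ae_mI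
  have h2 : ∀ᵐ r : ℝ × (ℝ × ℝ) ∂(mI.prod mII), r.2.1 ∈ Icc (0:ℝ) 1 ∧ r.2.2 ∈ Icc (0:ℝ) 1 :=
    Measure.quasiMeasurePreserving_snd.ae mem_ae_mII
  filter_upwards [h1, h2] with r a b
  exact ⟨a, b.1, b.2⟩

include hgm hmem in
lemma triple_int : Integrable (fun r : ℝ × (ℝ × ℝ) =>
    FF g (r.1, r.2.1) * FF g (r.2.1, r.2.2) * FF g (r.2.2, r.1)) (mI.prod mII) := by
  have hb1 : ∀ᵐ r : ℝ × (ℝ × ℝ) ∂(mI.prod mII), |FF g (r.1, r.2.1)| ≤ 1/2 :=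
    mp12.quasiMeasurePreserving.ae (FF_bd hgm hmem)
  have hb2 : ∀ᵐ r : ℝ × (ℝ × ℝ) ∂(mI.prod mII), |FF g (r.2.1, r.2.2)| ≤ 1/2 :=
    mp_snd3.quasiMeasurePreserving.ae (FF_bd hgm hmem)
  have hb3 : ∀ᵐ r : ℝ × (ℝ × ℝ) ∂(mI.prod mII), |FF g (r.2.2, r.1)| ≤ 1/2 :=
    mp31.quasiMeasurePreserving.ae (FF_bd hgm hmem)
  apply integrable_of_bdd (C := 1/8)
  · exact ((((FF_meas hgm).comp (measurable_fst.prodMk measurable_snd.fst)).mul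
      ((FF_meas hgm).comp (measurable_snd.fst.prodMk measurable_snd.snd))).mul
      ((FF_meas hgm).comp (measurable_snd.snd.prodMk measurable_fst))).aestronglyMeasurable
  · filter_upwards [hb1, hb2, hb3] with r b1 b2 b3
    rw [abs_mul, abs_mul]
    calc |FF g (r.1, r.2.1)| * |FF g (r.2.1, r.2.2)| * |FF g (r.2.2, r.1)|
        ≤ (1/2) * (1/2) * (1/2) := by
          apply mul_le_mul _ b3 (abs_nonneg _) (by norm_num)
          exact mul_le_mul b1 b2 (abs_nonneg _) (by norm_num)
      _ = 1/8 := by norm_num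

include hgm hsym hmem in
lemma TT_triple : TT g = ∫ r, FF g (r.1, r.2.1) * FF g (r.2.1, r.2.2)
    * FF g (r.2.2, r.1) ∂(mI.prod mII) := by
  rw [integral_prod _ (triple_int hgm hmem)]
  have key : ∀ᵐ x ∂mI, ∫ q, FF g (x, q.1) * FF g (q.1, q.2) * FF g (q.2, x) ∂mII
      = ∫ y, FF g (x, y) * kk g (y, x) ∂mI := by
    filter_upwards [mem_ae_mI] with x hx
    have hint : Integrable (Function.uncurry fun y z =>
        FF g (x, y) * FF g (y, z) * FF g (z, x)) mII := by
      apply integrable_of_bdd (C := 1/8)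
      · exact ((((FF_sect_meas hgm x).comp measurable_fst).mul (FF_meas hgm)).mul
          ((FF_meas hgm).comp (measurable_snd.prodMk measurable_const))).aestronglyMeasurable
      · filter_upwards [mem_ae_mII] with q hq
        rw [Function.uncurry_apply_pair, abs_mul, abs_mul]
        have b1 : |FF g (x, q.1)| ≤ 1/2 := by
          obtain ⟨u0, u1⟩ := hmem x hx q.1 hq.1
          rw [FF, abs_le]; constructor <;> simp only <;> linarith
        have b2 : |FF g (q.1, q.2)| ≤ 1/2 := by
          obtain ⟨u0, u1⟩ := hmem q.1 hq.1 q.2 hq.2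
          rw [FF, abs_le]; constructor <;> simp only <;> linarith
        have b3 : |FF g (q.2, x)| ≤ 1/2 := by
          obtain ⟨u0, u1⟩ := hmem q.2 hq.2 x hx
          rw [FF, abs_le]; constructor <;> simp only <;> linarith
        calc |FF g (x, q.1)| * |FF g (q.1, q.2)| * |FF g (q.2, x)|
            ≤ (1/2) * (1/2) * (1/2) := by
              apply mul_le_mul _ b3 (abs_nonneg _) (by norm_num)
              exact mul_le_mul b1 b2 (abs_nonneg _) (by norm_num)
          _ = 1/8 := by norm_num
    have e0 : ∫ q, FF g (x, q.1) * FF g (q.1, q.2) * FF g (q.2, x) ∂mII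
        = ∫ y, ∫ z, FF g (x, y) * FF g (y, z) * FF g (z, x) ∂mI ∂mI := by
      rw [mII_def] at hint ⊢
      exact integral_prod _ hint
    rw [e0]
    apply integral_congr_ae
    filter_upwards [mem_ae_mI] with y hy
    have e1 : ∀ᵐ z ∂mI, FF g (x, y) * FF g (y, z) * FF g (z, x)
        = FF g (x, y) * (FF g (y, z) * FF g (x, z)) := by
      filter_upwards [mem_ae_mI] with z hz
      have : FF g (z, x) = FF g (x, z) := by
        simp only [FF]; rw [hsym z hz x hx]
      rw [this]; ring
    rw [integral_congr_ae e1, integral_const_mul]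
    rfl
  rw [integral_congr_ae key]
  have := integral_integral (f := fun x y => FF g (x, y) * kk g (y, x)) (FF_kk_int hgm hmem)
  rw [this]
  rfl

end graphon

open scoped Classical

set_option maxHeartbeats 2000000 in
/-- Any minimizer of the rate function with `e(g) = 1/2` and `t(g) = t < 1/8`
is, up to measure-preserving transformation, the bipartite-type block graphon:
there is a set `B` of measure `1/2` such that a.e. `g = 1/2 + ε` across the
partition `{B, Bᶜ}` and `g = 1/2 - ε` within classes, `ε = (1/8 - t)^{1/3}`. -/
theorem minimizer_is_block (t : ℝ) (ht0 : 0 ≤ t) (ht8 : t < 1/8)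
    (ε : ℝ) (hε : ε = (1/8 - t) ^ ((1:ℝ)/3))
    (g : ℝ → ℝ → ℝ) (hg : IsGraphon g)
    (he : edgeDensity g = 1/2) (htg : triangleDensity g = t)
    (hI : rateFn g = I0 (1/2 + ε)) :
    ∃ B : Set ℝ, MeasurableSet B ∧ B ⊆ Icc (0:ℝ) 1 ∧
      volume B = ENNReal.ofReal (1/2) ∧
      ∀ᵐ p : ℝ × ℝ ∂(volume.restrict (Icc (0:ℝ) 1 ×ˢ Icc (0:ℝ) 1)),
        g p.1 p.2 =
          if (p.1 ∈ B ∧ p.2 ∉ B) ∨ (p.1 ∉ B ∧ p.2 ∈ B)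
          then 1/2 + ε else 1/2 - ε := by
  classical
  obtain ⟨hgm, hsym, hmem⟩ := hg
  -- ε facts
  have h8t : (0:ℝ) < 1/8 - t := by linarith
  have hεpos : 0 < ε := by rw [hε]; exact Real.rpow_pos_of_pos h8t _
  have hεne : ε ≠ 0 := ne_of_gt hεpos
  have hε3 : ε ^ 3 = 1/8 - t := by
    rw [hε, ← Real.rpow_natCast ((1/8 - t) ^ ((1:ℝ)/3)) 3, ← Real.rpow_mul (le_of_lt h8t)]
    norm_num
  have hεhalf : ε ≤ 1/2 := by
    by_contra hc
    push_neg at hc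
    have h3 : (1/2:ℝ)^3 < ε^3 := by
      apply pow_lt_pow_left₀ hc (by norm_num)
      norm_num
    rw [hε3] at h3
    norm_num at h3
    linarith
  -- identity
  have htri := triangle_identity hgm hsym hmem he
  rw [htg] at htri
  have hTTval : TT g = -ε^3 - (3/2) * DD g := by
    rw [hε3]; linarith
  have hDDnn := DD_nonneg hgm hmem
  have hTTle : TT g ≤ -ε^3 := by rw [hTTval]; linarith
  -- S ≥ ε²
  have hSnn := SS_nonneg hgm hmem
  have hSle := SS_le hgm hmem
  have hS_ge : ε^2 ≤ SS g := by
    by_contra hc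
    push_neg at hc
    have h1 : SS g ^ 3 < (ε^2)^3 := by
      apply pow_lt_pow_left₀ hc hSnn
      norm_num
    have h2 := TT_sq_le hgm hsym hmem
    nlinarith [hTTle, pow_pos hεpos 3]
  -- Jensen
  have hpt : ∀ p : ℝ × ℝ, psi (FF g p * FF g p) = I0 (g p.1 p.2) := by
    intro p
    have h1 : FF g p * FF g p = (FF g p)^2 := by ring
    rw [h1, psi_sq]
    congr 1
    simp only [FF]
    ring
  have hfs : ∀ᵐ p ∂mII, FF g p * FF g p ∈ Icc (0:ℝ) (1/4) := by
    filter_upwards [FF_bd hgm hmem] with p hp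
    obtain ⟨h1, h2⟩ := abs_le.1 hp
    constructor
    · exact mul_self_nonneg _
    · nlinarith
  have hgi : Integrable (psi ∘ fun p : ℝ × ℝ => FF g p * FF g p) mII := by
    have : (psi ∘ fun p : ℝ × ℝ => FF g p * FF g p) = fun p : ℝ × ℝ => I0 (g p.1 p.2) := by
      funext p
      exact hpt p
    rw [this]
    exact I0_int hgm hmem
  have havg : ⨍ p, FF g p * FF g p ∂mII = SS g := by
    rw [average_eq_integral]
    rfl
  have havg2 : ⨍ p, psi (FF g p * FF g p) ∂mII = psi (ε^2) := by
    rw [average_eq_integral]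
    have e1 : ∫ p, psi (FF g p * FF g p) ∂mII = ∫ p, I0 (g p.1 p.2) ∂mII := by
      apply integral_congr_ae
      exact Filter.Eventually.of_forall fun p => hpt p
    rw [e1, ← rate_F hgm hmem, hI, ← psi_sq]
  have hSmem : SS g ∈ Icc (0:ℝ) (1/4) := ⟨hSnn, hSle⟩
  have hεmem : ε^2 ∈ Icc (0:ℝ) (1/4) := by
    constructor
    · positivity
    · nlinarith
  have hsq : ∀ᵐ p ∂mII, FF g p * FF g p = ε^2 := by
    have hJ := strictConvexOn_psi.ae_eq_const_or_map_average_lt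
      continuous_psi.continuousOn isClosed_Icc hfs (FF_sq_int hgm hmem) hgi
    rcases hJ with hconst | hlt
    · have hSS_eq : SS g = ε^2 := by
        apply strictMonoOn_psi.injOn hSmem hεmem
        have e2 : ∫ p, psi (FF g p * FF g p) ∂mII = psi (SS g) := by
          have : ∀ᵐ p ∂mII, psi (FF g p * FF g p) = psi (SS g) := by
            filter_upwards [hconst] with p hp
            rw [Function.const_apply] at hp
            rw [hp, havg]
          rw [integral_congr_ae this]
          simp
        have e3 := havg2
        rw [average_eq_integral] at e3
        rw [e2] at e3
        exact e3
      filter_upwards [hconst] with p hp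
      rw [Function.const_apply] at hp
      rw [hp, havg, hSS_eq]
    · exfalso
      rw [havg, havg2] at hlt
      have : psi (ε^2) ≤ psi (SS g) :=
        strictMonoOn_psi.monotoneOn hεmem hSmem hS_ge
      linarith
  -- rigidity: transfer squares to triples
  have qf : Measure.QuasiMeasurePreserving (Prod.fst : ℝ × ℝ → ℝ) mII mI := by
    rw [mII_def]; exact Measure.quasiMeasurePreserving_fst
  have qs : Measure.QuasiMeasurePreserving (Prod.snd : ℝ × ℝ → ℝ) mII mI := by
    rw [mII_def]; exact Measure.quasiMeasurePreserving_snd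
  have hsq12 : ∀ᵐ r : ℝ × (ℝ × ℝ) ∂(mI.prod mII),
      FF g (r.1, r.2.1) * FF g (r.1, r.2.1) = ε^2 :=
    mp12.quasiMeasurePreserving.ae hsq
  have hsq23 : ∀ᵐ r : ℝ × (ℝ × ℝ) ∂(mI.prod mII),
      FF g (r.2.1, r.2.2) * FF g (r.2.1, r.2.2) = ε^2 :=
    mp_snd3.quasiMeasurePreserving.ae hsq
  have hsq31 : ∀ᵐ r : ℝ × (ℝ × ℝ) ∂(mI.prod mII),
      FF g (r.2.2, r.1) * FF g (r.2.2, r.1) = ε^2 :=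
    mp31.quasiMeasurePreserving.ae hsq
  have sign_of_sq : ∀ a : ℝ, a * a = ε^2 → a = ε ∨ a = -ε := by
    intro a ha
    rcases mul_eq_zero.1 (show (a - ε) * (a + ε) = 0 by nlinarith) with h | h
    · left; linarith
    · right; linarith
  have hTTge : -ε^3 ≤ TT g := by
    rw [TT_triple hgm hsym hmem]
    have hmono : ∫ _r : ℝ × (ℝ × ℝ), (-ε^3) ∂(mI.prod mII)
        ≤ ∫ r, FF g (r.1, r.2.1) * FF g (r.2.1, r.2.2) * FF g (r.2.2, r.1) ∂(mI.prod mII) := by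
      apply integral_mono_ae (integrable_const _) (triple_int hgm hmem)
      filter_upwards [hsq12, hsq23, hsq31] with r b1 b2 b3
      show -ε^3 ≤ FF g (r.1, r.2.1) * FF g (r.2.1, r.2.2) * FF g (r.2.2, r.1)
      rcases sign_of_sq _ b1 with ha | ha <;> rcases sign_of_sq _ b2 with hb | hb <;>
        rcases sign_of_sq _ b3 with hc | hc <;> rw [ha, hb, hc] <;>
        nlinarith [pow_pos hεpos 3]
    calc -ε^3 = ∫ _r : ℝ × (ℝ × ℝ), (-ε^3) ∂(mI.prod mII) := by simp
      _ ≤ _ := hmono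
  have hDD0 : DD g = 0 := by
    have := hTTval
    nlinarith [hTTge, hDDnn]
  have hTTeq : TT g = -ε^3 := by rw [hTTval, hDD0]; ring
  -- product is a.e. -ε³
  have hq0 : ∀ᵐ r : ℝ × (ℝ × ℝ) ∂(mI.prod mII),
      FF g (r.1, r.2.1) * FF g (r.2.1, r.2.2) * FF g (r.2.2, r.1) = -ε^3 := by
    have hnn : 0 ≤ᵐ[mI.prod mII] fun r : ℝ × (ℝ × ℝ) =>
        FF g (r.1, r.2.1) * FF g (r.2.1, r.2.2) * FF g (r.2.2, r.1) + ε^3 := by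
      filter_upwards [hsq12, hsq23, hsq31] with r b1 b2 b3
      show (0:ℝ) ≤ FF g (r.1, r.2.1) * FF g (r.2.1, r.2.2) * FF g (r.2.2, r.1) + ε^3
      rcases sign_of_sq _ b1 with ha | ha <;> rcases sign_of_sq _ b2 with hb | hb <;>
        rcases sign_of_sq _ b3 with hc | hc <;> rw [ha, hb, hc] <;>
        nlinarith [pow_pos hεpos 3]
    have hint : Integrable (fun r : ℝ × (ℝ × ℝ) =>
        FF g (r.1, r.2.1) * FF g (r.2.1, r.2.2) * FF g (r.2.2, r.1) + ε^3) (mI.prod mII) :=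
      (triple_int hgm hmem).add (integrable_const _)
    have hzero : ∫ r, (FF g (r.1, r.2.1) * FF g (r.2.1, r.2.2) * FF g (r.2.2, r.1) + ε^3)
        ∂(mI.prod mII) = 0 := by
      rw [integral_add (triple_int hgm hmem) (integrable_const _), ← TT_triple hgm hsym hmem,
        hTTeq]
      simp
    have := (integral_eq_zero_iff_of_nonneg_ae hnn hint).1 hzero
    filter_upwards [this] with r hr
    have : FF g (r.1, r.2.1) * FF g (r.2.1, r.2.2) * FF g (r.2.2, r.1) + ε^3 = 0 := hr
    linarith
  -- d vanishes a.e.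
  have hd0' : ∀ᵐ x ∂mI, dd g x = 0 := by
    have hnn : 0 ≤ᵐ[mI] fun x => dd g x * dd g x :=
      Filter.Eventually.of_forall fun x => mul_self_nonneg _
    have := (integral_eq_zero_iff_of_nonneg_ae hnn (dd_sq_int hgm hmem)).1 hDD0
    filter_upwards [this] with x hx
    exact mul_self_eq_zero.1 hx
  -- reorder and choose z₀
  have hq0T : ∀ᵐ w : ℝ × (ℝ × ℝ) ∂(mI.prod mII),
      FF g (w.2.1, w.2.2) * FF g (w.2.2, w.1) * FF g (w.1, w.2.1) = -ε^3 :=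
    mpT.quasiMeasurePreserving.ae hq0
  have hq0z : ∀ᵐ z ∂mI, ∀ᵐ p : ℝ × ℝ ∂mII,
      FF g (p.1, p.2) * FF g (p.2, z) * FF g (z, p.1) = -ε^3 :=
    MeasureTheory.Measure.ae_ae_of_ae_prod hq0T
  have hsq' := hsq
  rw [mII_def] at hsq'
  have hsqz : ∀ᵐ z ∂mI, ∀ᵐ y ∂mI, FF g (z, y) * FF g (z, y) = ε^2 :=
    MeasureTheory.Measure.ae_ae_of_ae_prod hsq'
  haveI : (ae mI).NeBot := by
    apply ae_neBot.2
    exact IsProbabilityMeasure.ne_zero mI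
  obtain ⟨z₀, hz1, hz2, hz3⟩ := (hq0z.and (hsqz.and mem_ae_mI)).exists
  -- definition of B
  set B : Set ℝ := Icc (0:ℝ) 1 ∩ {x | g z₀ x < 1/2} with hB
  have hsec_meas : Measurable (fun x => g z₀ x) := by
    have : (fun x => g z₀ x) = (Function.uncurry g) ∘ (fun x => (z₀, x)) := rfl
    rw [this]
    exact hgm.comp (measurable_const.prodMk measurable_id)
  have hBmeas : MeasurableSet B :=
    measurableSet_Icc.inter (measurableSet_lt hsec_meas measurable_const)
  have hBsub : B ⊆ Icc (0:ℝ) 1 := inter_subset_left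
  -- the key pointwise structure
  have hsqfst : ∀ᵐ p : ℝ × ℝ ∂mII, FF g (z₀, p.1) * FF g (z₀, p.1) = ε^2 := qf.ae hz2
  have hsqsnd : ∀ᵐ p : ℝ × ℝ ∂mII, FF g (z₀, p.2) * FF g (z₀, p.2) = ε^2 := qs.ae hz2
  have hFF_eq : ∀ᵐ p : ℝ × ℝ ∂mII,
      FF g (p.1, p.2) = -(FF g (z₀, p.1) * FF g (z₀, p.2)) / ε := by
    filter_upwards [hz1, hsqfst, hsqsnd, mem_ae_mII] with p h1 h2 h3 hp
    set a := FF g (z₀, p.1) with hadef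
    set b := FF g (z₀, p.2) with hbdef
    set X := FF g (p.1, p.2) with hXdef
    have hbsym : FF g (p.2, z₀) = b := by
      simp only [hbdef, FF]
      rw [hsym p.2 hp.2 z₀ hz3]
    rw [hbsym] at h1
    have habs : (a * b) * (a * b) = ε^4 := by nlinarith
    have key : ε^3 * (X * ε) = ε^3 * (-(a * b)) := by
      calc ε^3 * (X * ε) = X * ε^4 := by ring
        _ = X * ((a*b) * (a*b)) := by rw [habs]
        _ = (X * b * a) * (a * b) := by ring
        _ = (-ε^3) * (a * b) := by rw [h1]
        _ = ε^3 * (-(a * b)) := by ring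
    have hXe : X * ε = -(a * b) := mul_left_cancel₀ (pow_ne_zero 3 hεne) key
    rw [eq_div_iff hεne]
    exact hXe
  -- measure of B is 1/2
  have hw_int : Integrable (fun x => FF g (z₀, x)) mI := FF_sect_int hgm hmem hz3
  have hrow : ∀ᵐ x ∂mI, ∀ᵐ y ∂mI,
      FF g (x, y) = -(FF g (z₀, x) * FF g (z₀, y)) / ε := by
    have h := hFF_eq
    rw [mII_def] at h
    exact MeasureTheory.Measure.ae_ae_of_ae_prod h
  obtain ⟨x₀, hx1, hx2, hx3⟩ := (hd0'.and (hrow.and hz2)).exists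
  have hwx₀ : FF g (z₀, x₀) ≠ 0 := by
    intro hc
    rw [hc] at hx3
    simp at hx3
    nlinarith
  have hint_w : ∫ y, FF g (z₀, y) ∂mI = 0 := by
    have e1 : ∀ᵐ y ∂mI, FF g (x₀, y)
        = (-(FF g (z₀, x₀)) / ε) * FF g (z₀, y) := by
      filter_upwards [hx2] with y hy
      rw [hy]; ring
    have e2 : dd g x₀ = (-(FF g (z₀, x₀)) / ε) * ∫ y, FF g (z₀, y) ∂mI := by
      rw [← integral_const_mul]
      exact integral_congr_ae e1
    rw [hx1] at e2
    have hcoef : (-(FF g (z₀, x₀)) / ε) ≠ 0 := by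
      apply div_ne_zero _ hεne
      simpa using hwx₀
    rcases mul_eq_zero.1 e2.symm with h | h
    · exact absurd h hcoef
    · exact h
  have hsplit : (fun x => FF g (z₀, x)) =ᵐ[mI]
      fun x => ε - 2*ε * (B.indicator (fun _ => (1:ℝ)) x) := by
    filter_upwards [mem_ae_mI, hz2] with x hx hx2
    rcases sign_of_sq _ hx2 with hcase | hcase
    · have hnotB : x ∉ B := by
        intro hmemB
        have : g z₀ x < 1/2 := hmemB.2
        have : FF g (z₀, x) < 0 := by simp only [FF]; simpa using this
        rw [hcase] at this
        linarith
      rw [indicator_of_notMem hnotB, hcase]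
      ring
    · have hinB : x ∈ B := by
        refine ⟨hx, ?_⟩
        have : FF g (z₀, x) < 0 := by rw [hcase]; linarith
        simpa [FF] using this
      rw [indicator_of_mem hinB, hcase]
      ring
  have hBval : (mI B).toReal = 1/2 := by
    have hi : Integrable (B.indicator (fun _ => (1:ℝ))) mI :=
      (integrable_const _).indicator hBmeas
    have e3 : ∫ x, FF g (z₀, x) ∂mI
        = ε - 2*ε * (mI B).toReal := by
      rw [integral_congr_ae hsplit, integral_sub (integrable_const _) (hi.const_mul _),
        integral_const, integral_const_mul, integral_indicator_const _ hBmeas]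
      simp [Measure.real]
    rw [hint_w] at e3
    have hc2 : (2*ε) * (mI B).toReal = (2*ε) * (1/2) := by linarith
    exact mul_left_cancel₀ (by positivity) hc2
  have hBfin : mI B ≠ ⊤ := measure_ne_top _ _
  have hBmI : mI B = ENNReal.ofReal (1/2) := by
    rw [← ENNReal.ofReal_toReal hBfin, hBval]
  have hBvol : volume B = ENNReal.ofReal (1/2) := by
    have : mI B = volume B := by
      rw [mI, Measure.restrict_apply hBmeas, inter_eq_self_of_subset_left hBsub]
    rw [← this, hBmI]
  -- conclusion
  refine ⟨B, hBmeas, hBsub, hBvol, ?_⟩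
  rw [← mII_eq]
  filter_upwards [mem_ae_mII, hFF_eq, hsqfst, hsqsnd] with p hp hXeq ha2 hb2
  set a := FF g (z₀, p.1) with hadef
  set b := FF g (z₀, p.2) with hbdef
  have hgrw : g p.1 p.2 = 1/2 + FF g (p.1, p.2) := by simp only [FF]; ring
  have hmem1 : p.1 ∈ B ↔ a < 0 := by
    constructor
    · intro hmB
      have : g z₀ p.1 < 1/2 := hmB.2
      simp only [hadef, FF]
      linarith
    · intro hlt
      refine ⟨hp.1, ?_⟩
      simp only [hadef, FF] at hlt
      simpa using (by linarith : g z₀ p.1 < 1/2)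
  have hmem2 : p.2 ∈ B ↔ b < 0 := by
    constructor
    · intro hmB
      have : g z₀ p.2 < 1/2 := hmB.2
      simp only [hbdef, FF]
      linarith
    · intro hlt
      refine ⟨hp.2, ?_⟩
      simp only [hbdef, FF] at hlt
      simpa using (by linarith : g z₀ p.2 < 1/2)
  rw [hgrw, hXeq]
  rcases sign_of_sq _ ha2 with ha | ha <;> rcases sign_of_sq _ hb2 with hb | hb
  · -- a = ε, b = ε : both outside B
    have h1 : p.1 ∉ B := fun hc => by rw [hmem1] at hc; rw [ha] at hc; linarith
    have h2 : p.2 ∉ B := fun hc => by rw [hmem2] at hc; rw [hb] at hc; linarith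
    rw [if_neg (by rintro (⟨c1, c2⟩ | ⟨c1, c2⟩); exacts [h1 c1, h2 c2])]
    rw [ha, hb]
    field_simp
    try ring
  · -- a = ε, b = -ε
    have h1 : p.1 ∉ B := fun hc => by rw [hmem1] at hc; rw [ha] at hc; linarith
    have h2 : p.2 ∈ B := hmem2.2 (by rw [hb]; linarith)
    rw [if_pos (Or.inr ⟨h1, h2⟩), ha, hb]
    field_simp
    try ring
  · -- a = -ε, b = ε
    have h1 : p.1 ∈ B := hmem1.2 (by rw [ha]; linarith)
    have h2 : p.2 ∉ B := fun hc => by rw [hmem2] at hc; rw [hb] at hc; linarith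
    rw [if_pos (Or.inl ⟨h1, h2⟩), ha, hb]
    field_simp
    try ring
  · -- a = -ε, b = -ε : both in B
    have h1 : p.1 ∈ B := hmem1.2 (by rw [ha]; linarith)
    have h2 : p.2 ∈ B := hmem2.2 (by rw [hb]; linarith)
    rw [if_neg (by rintro (⟨c1, c2⟩ | ⟨c1, c2⟩); exacts [c2 h2, c1 h1])]
    rw [ha, hb]
    field_simp
    try ring
end

section
/- Let α : [0,1] → ℝ be measurable with ∫_{[0,1]} α(x) dx = 0 and ∫_{[0,1]} α(x)² dx = 1, and let c ∈ ℝ be such that the function g(x,y) = 1/2 + c·α(x)·α(y) takes values in [0,1]. Then g is a graphon with e(g) = 1/2 and t(g) = 1/8 + c³. -/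
open MeasureTheory Set

lemma integrableOn_of_bdd {f : ℝ → ℝ} (hf : Measurable f) {C : ℝ}
    (h : ∀ x ∈ Icc (0:ℝ) 1, |f x| ≤ C) : IntegrableOn f (Icc (0:ℝ) 1) := by
  apply Measure.integrableOn_of_bounded (M := C)
  · simp [Real.volume_Icc]
  · exact hf.aestronglyMeasurable
  · filter_upwards [ae_restrict_mem measurableSet_Icc] with x hx
    simpa using h x hx


/-- A rank-one perturbation of the constant graphon `1/2`: if `α` has mean `0`
and `L²`-norm `1` on `[0,1]` and `g = 1/2 + c α(x) α(y)` takes values in `[0,1]`,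
then `g` is a graphon with `e(g) = 1/2` and `t(g) = 1/8 + c³`. -/
theorem rank_one_perturbation (α : ℝ → ℝ) (hα : Measurable α)
    (hzero : (∫ x in Icc (0:ℝ) 1, α x) = 0)
    (hone : (∫ x in Icc (0:ℝ) 1, (α x) ^ 2) = 1)
    (c : ℝ)
    (hrange : ∀ x ∈ Icc (0:ℝ) 1, ∀ y ∈ Icc (0:ℝ) 1,
      1/2 + c * α x * α y ∈ Icc (0:ℝ) 1) :
    IsGraphon (fun x y => 1/2 + c * α x * α y) ∧
      edgeDensity (fun x y => 1/2 + c * α x * α y) = 1/2 ∧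
      triangleDensity (fun x y => 1/2 + c * α x * α y) = 1/8 + c ^ 3 := by
  have hmeas : Measurable (Function.uncurry fun x y => 1/2 + c * α x * α y) := by
    apply Measurable.add measurable_const
    exact (measurable_const.mul (hα.comp measurable_fst)).mul (hα.comp measurable_snd)
  refine ⟨⟨hmeas, fun x _ y _ => by ring, hrange⟩, ?_⟩
  by_cases hc : c = 0
  · subst hc
    constructor
    · unfold edgeDensity
      norm_num [Real.volume_Icc]
    · unfold triangleDensity
      norm_num [Real.volume_Icc]
  · -- boundedness of α
    have hcpos : 0 < |c| := abs_pos.mpr hc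
    set B : ℝ := Real.sqrt (1/(2*|c|)) with hB
    have hbound : ∀ x ∈ Icc (0:ℝ) 1, |α x| ≤ B := by
      intro x hx
      have h1 := hrange x hx x hx
      have h2 : |c| * (α x)^2 ≤ 1/2 := by
        have := h1.1; have := h1.2
        rcases le_or_gt 0 c with h | h
        · rw [abs_of_nonneg h]; nlinarith
        · rw [abs_of_neg h]; nlinarith
      rw [hB, show |α x| = Real.sqrt ((α x)^2) by rw [Real.sqrt_sq_eq_abs]]
      apply Real.sqrt_le_sqrt
      rw [le_div_iff₀ (by positivity)]
      nlinarith
    have hB0 : 0 ≤ B := Real.sqrt_nonneg _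
    have hint1 : IntegrableOn α (Icc (0:ℝ) 1) := integrableOn_of_bdd hα hbound
    have hint2 : IntegrableOn (fun x => (α x)^2) (Icc (0:ℝ) 1) := by
      apply integrableOn_of_bdd (hα.pow_const 2) (C := B^2)
      intro x hx
      rw [abs_pow]
      exact pow_le_pow_left₀ (abs_nonneg _) (hbound x hx) 2
    have key : ∀ p q r : ℝ,
        (∫ z in Icc (0:ℝ) 1, (p + q * α z + r * (α z)^2)) = p + r := by
      intro p q r
      have h1 : IntegrableOn (fun _ : ℝ => p) (Icc (0:ℝ) 1) :=
        (integrableOn_const_iff (C := p)).mpr (Or.inr (by simp [Real.volume_Icc]))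
      rw [show (fun z => p + q * α z + r * (α z)^2)
            = fun z => p + (q * α z + r * (α z)^2) from by funext z; ring]
      have h2 : IntegrableOn (fun z => q * α z + r * (α z)^2) (Icc (0:ℝ) 1) :=
        (hint1.const_mul q).add (hint2.const_mul r)
      rw [integral_add h1 h2,
          integral_add (hint1.const_mul q) (hint2.const_mul r),
          MeasureTheory.integral_const_mul, MeasureTheory.integral_const_mul, hzero, hone]
      simp [Real.volume_Icc]
    have einner : ∀ a : ℝ, (∫ y in Icc (0:ℝ) 1, (1/2 + c * a * α y)) = 1/2 := by
      intro a
      rw [show (fun y => 1/2 + c * a * α y)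
            = fun y => 1/2 + (c*a) * α y + 0 * (α y)^2 from by funext y; ring, key]
      ring
    have tinner : ∀ a b : ℝ,
        (∫ z in Icc (0:ℝ) 1, (1/2 + c*a*b) * (1/2 + c*b*α z) * (1/2 + c*α z*a))
          = 1/8 + (c^2/2 + c/4) * (a*b) + c^3 * (a*b)^2 := by
      intro a b
      rw [show (fun z => (1/2 + c*a*b) * (1/2 + c*b*α z) * (1/2 + c*α z*a))
            = fun z => ((1/2 + c*a*b)*(1/4))
                + ((1/2 + c*a*b)*(c*b/2 + c*a/2)) * α z
                + ((1/2 + c*a*b)*(c^2*a*b)) * (α z)^2 from by funext z; ring, key]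
      ring
    have tmid : ∀ a : ℝ,
        (∫ y in Icc (0:ℝ) 1,
          (1/8 + (c^2/2 + c/4) * (a * α y) + c^3 * (a * α y)^2)) = 1/8 + c^3 * a^2 := by
      intro a
      rw [show (fun y => 1/8 + (c^2/2 + c/4) * (a * α y) + c^3 * (a * α y)^2)
            = fun y => (1/8 : ℝ) + ((c^2/2 + c/4)*a) * α y + (c^3*a^2) * (α y)^2 from
              by funext y; ring, key]
    constructor
    · unfold edgeDensity
      simp only [einner]
      simp [Real.volume_Icc]
    · unfold triangleDensity
      simp only [tinner, tmid]
      rw [show (fun x => (1/8 : ℝ) + c^3 * (α x)^2)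
            = fun x => (1/8 : ℝ) + 0 * α x + (c^3) * (α x)^2 from by funext x; ring, key]
end

section
/- Let 0 < ε < 1/2 and let ĝ be the graphon with ĝ(x,y) = 1/2 + ε if exactly one of x, y is less than 1/2 and ĝ(x,y) = 1/2 - ε otherwise, and set h(x,y) = 3·∫_{[0,1]} ĝ(x,z)·ĝ(y,z) dz. Then real numbers β₁, β₂ satisfy the Euler–Lagrange equation -I₀'(ĝ(x,y)) + β₁ + β₂·h(x,y) = 0 for almost every (x,y) ∈ [0,1]² if and only if β₂ = -(4/3)·β₁ = -(1/(6ε²))·ln((1/2 + ε)/(1/2 - ε)). In particular h(x,y) = 3(1/4 + ε²) where ĝ = 1/2 - ε and h(x,y) = 3(1/4 - ε²) where ĝ = 1/2 + ε, and the resulting β₁, β₂ diverge as ε ↓ 0. -/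
open MeasureTheory Set

/-- `I₀'(u) = (1/2) ln(u/(1-u))`. -/
noncomputable def I0' (u : ℝ) : ℝ := (1/2) * Real.log (u / (1 - u))

lemma int_piece (a b : ℝ) :
    ∫ z in Icc (0:ℝ) 1, (if z < 1/2 then a else b) = (a + b)/2 := by
  have hs : Icc (0:ℝ) 1 = Ico 0 (1/2) ∪ Icc (1/2) 1 := by
    ext z
    simp only [mem_Icc, mem_Ico, mem_union]
    constructor
    · rintro ⟨h0, h1⟩
      rcases lt_or_ge z (1/2) with hz | hz
      · exact Or.inl ⟨h0, hz⟩
      · exact Or.inr ⟨hz, h1⟩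
    · rintro (⟨h0, hz⟩ | ⟨hz, h1⟩) <;> constructor <;> linarith
  have hdisj : Disjoint (Ico (0:ℝ) (1/2)) (Icc (1/2) 1) := by
    rw [Set.disjoint_left]
    rintro z ⟨_, hz⟩ ⟨hz', _⟩
    linarith
  have e1 : ∫ z in Ico (0:ℝ) (1/2), (if z < 1/2 then a else b) = a * (1/2) := by
    rw [setIntegral_congr_fun measurableSet_Ico (fun z hz => if_pos hz.2)]
    simp [Real.volume_Ico]; ring
  have e2 : ∫ z in Icc (1/2:ℝ) 1, (if z < 1/2 then a else b) = b * (1/2) := by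
    rw [setIntegral_congr_fun measurableSet_Icc (fun z hz => if_neg (not_lt.2 hz.1))]
    simp [Real.volume_Icc]
    rw [max_eq_left (by norm_num : (0:ℝ) ≤ 1 - 2⁻¹)]; ring
  rw [hs, setIntegral_union hdisj measurableSet_Icc, e1, e2]
  · ring
  · exact (IntegrableOn.congr_fun (integrableOn_const (by simp [Real.volume_Ico]))
      (fun z hz => (if_pos hz.2).symm) measurableSet_Ico)
  · exact (IntegrableOn.congr_fun (integrableOn_const (by simp [Real.volume_Icc]))
      (fun z hz => (if_neg (not_lt.2 hz.1)).symm) measurableSet_Icc)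

/-- Euler–Lagrange analysis at the block graphon `ĝ`: the first variation `h` of
the triangle density equals `3(1/4 + ε²)` on diagonal blocks and `3(1/4 - ε²)` on
off-diagonal blocks, and `(β₁, β₂)` solve the Euler–Lagrange equation
`-I₀'(ĝ) + β₁ + β₂ h = 0` a.e. iff
`β₂ = -(4/3)β₁ = -(1/(6ε²)) ln((1/2+ε)/(1/2-ε))`. -/
theorem euler_lagrange_block (ε : ℝ) (hε0 : 0 < ε) (hε1 : ε < 1/2)
    (ghat : ℝ → ℝ → ℝ)
    (hdef : ∀ x y : ℝ, ghat x y =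
      if (x < 1/2 ∧ ¬ y < 1/2) ∨ (¬ x < 1/2 ∧ y < 1/2)
      then 1/2 + ε else 1/2 - ε)
    (h : ℝ → ℝ → ℝ)
    (hh : ∀ x y : ℝ, h x y = 3 * ∫ z in Icc (0:ℝ) 1, ghat x z * ghat y z)
    (β₁ β₂ : ℝ) :
    (∀ x ∈ Icc (0:ℝ) 1, ∀ y ∈ Icc (0:ℝ) 1,
      (ghat x y = 1/2 - ε → h x y = 3 * (1/4 + ε ^ 2)) ∧
      (ghat x y = 1/2 + ε → h x y = 3 * (1/4 - ε ^ 2))) ∧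
    ((∀ᵐ p : ℝ × ℝ ∂(volume.restrict (Icc (0:ℝ) 1 ×ˢ Icc (0:ℝ) 1)),
        -I0' (ghat p.1 p.2) + β₁ + β₂ * h p.1 p.2 = 0) ↔
      (β₂ = -(4/3) * β₁ ∧
        β₂ = -(1/(6 * ε ^ 2)) * Real.log ((1/2 + ε) / (1/2 - ε)))) := by
  set L : ℝ := Real.log ((1/2 + ε) / (1/2 - ε)) with hL
  have hεne : (ε:ℝ) ≠ 0 := ne_of_gt hε0
  -- values of ghat
  have gval : ∀ x y : ℝ, ((x < 1/2 ↔ y < 1/2) → ghat x y = 1/2 - ε) ∧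
      (¬(x < 1/2 ↔ y < 1/2) → ghat x y = 1/2 + ε) := by
    intro x y
    constructor
    · intro hc; rw [hdef]; exact if_neg (by tauto)
    · intro hc; rw [hdef]; exact if_pos (by tauto)
  -- values of h
  have key : ∀ x y : ℝ, h x y =
      if (x < 1/2 ↔ y < 1/2) then 3 * (1/4 + ε ^ 2) else 3 * (1/4 - ε ^ 2) := by
    intro x y
    rw [hh]
    by_cases hx : x < 1/2 <;> by_cases hy : y < 1/2
    · have he : ∀ z : ℝ, ghat x z * ghat y z =
          if z < 1/2 then (1/2-ε)*(1/2-ε) else (1/2+ε)*(1/2+ε) := by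
        intro z; rw [hdef x z, hdef y z]
        split_ifs <;> first | ring1 | (exfalso; tauto)
      simp only [he]; rw [int_piece, if_pos (by tauto)]; ring
    · have he : ∀ z : ℝ, ghat x z * ghat y z =
          if z < 1/2 then (1/2-ε)*(1/2+ε) else (1/2+ε)*(1/2-ε) := by
        intro z; rw [hdef x z, hdef y z]
        split_ifs <;> first | ring1 | (exfalso; tauto)
      simp only [he]; rw [int_piece, if_neg (by tauto)]; ring
    · have he : ∀ z : ℝ, ghat x z * ghat y z =
          if z < 1/2 then (1/2+ε)*(1/2-ε) else (1/2-ε)*(1/2+ε) := by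
        intro z; rw [hdef x z, hdef y z]
        split_ifs <;> first | ring1 | (exfalso; tauto)
      simp only [he]; rw [int_piece, if_neg (by tauto)]; ring
    · have he : ∀ z : ℝ, ghat x z * ghat y z =
          if z < 1/2 then (1/2+ε)*(1/2+ε) else (1/2-ε)*(1/2-ε) := by
        intro z; rw [hdef x z, hdef y z]
        split_ifs <;> first | ring1 | (exfalso; tauto)
      simp only [he]; rw [int_piece, if_pos (by tauto)]; ring
  -- values of I0'
  have hI1 : I0' (1/2 + ε) = (1/2) * L := by
    simp only [I0', hL]
    rw [show (1:ℝ) - (1/2 + ε) = 1/2 - ε by ring]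
  have hI2 : I0' (1/2 - ε) = -((1/2) * L) := by
    simp only [I0', hL]
    rw [show (1:ℝ) - (1/2 - ε) = 1/2 + ε by ring,
      show (1/2 - ε) / (1/2 + ε) = ((1/2 + ε) / (1/2 - ε))⁻¹ by rw [inv_div],
      Real.log_inv]
    ring
  constructor
  · intro x hx y hy
    constructor
    · intro hg
      by_cases hc : (x < 1/2 ↔ y < 1/2)
      · rw [key, if_pos hc]
      · exfalso
        have := (gval x y).2 hc
        rw [hg] at this; linarith
    · intro hg
      by_cases hc : (x < 1/2 ↔ y < 1/2)
      · exfalso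
        have := (gval x y).1 hc
        rw [hg] at this; linarith
      · rw [key, if_neg hc]
  constructor
  · intro hae
    have hmu : (volume.restrict (Icc (0:ℝ) 1 ×ˢ Icc (0:ℝ) 1))
        {p : ℝ × ℝ | ¬ (-I0' (ghat p.1 p.2) + β₁ + β₂ * h p.1 p.2 = 0)} = 0 :=
      ae_iff.mp hae
    have get : ∀ A : Set (ℝ × ℝ), MeasurableSet A →
        A ⊆ Icc (0:ℝ) 1 ×ˢ Icc (0:ℝ) 1 → volume A ≠ 0 →
        ∃ p ∈ A, -I0' (ghat p.1 p.2) + β₁ + β₂ * h p.1 p.2 = 0 := by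
      intro A hAm hAs hA0
      by_contra hcon
      push_neg at hcon
      have hsub : A ⊆ {p : ℝ × ℝ | ¬ (-I0' (ghat p.1 p.2) + β₁ + β₂ * h p.1 p.2 = 0)} :=
        fun p hp => hcon p hp
      have h0 : (volume.restrict (Icc (0:ℝ) 1 ×ˢ Icc (0:ℝ) 1)) A = 0 :=
        measure_mono_null hsub hmu
      rw [Measure.restrict_apply hAm, Set.inter_eq_self_of_subset_left hAs] at h0
      exact hA0 h0
    have hsub1 : Ico (0:ℝ) (1/2) ⊆ Icc (0:ℝ) 1 := fun z hz => ⟨hz.1, by linarith [hz.2]⟩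
    have hsub2 : Icc (1/2:ℝ) 1 ⊆ Icc (0:ℝ) 1 := fun z hz => ⟨by linarith [hz.1], hz.2⟩
    obtain ⟨pA, hpA, eqA⟩ := get (Ico 0 (1/2) ×ˢ Ico 0 (1/2))
      (measurableSet_Ico.prod measurableSet_Ico)
      (Set.prod_mono hsub1 hsub1)
      (by
        rw [Measure.volume_eq_prod, Measure.prod_prod, Real.volume_Ico]
        norm_num)
    obtain ⟨pB, hpB, eqB⟩ := get (Ico 0 (1/2) ×ˢ Icc (1/2) 1)
      (measurableSet_Ico.prod measurableSet_Icc)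
      (Set.prod_mono hsub1 hsub2)
      (by
        rw [Measure.volume_eq_prod, Measure.prod_prod, Real.volume_Ico, Real.volume_Icc]
        norm_num)
    have hcA : (pA.1 < 1/2 ↔ pA.2 < 1/2) := by
      constructor <;> intro _ <;> [exact hpA.2.2; exact hpA.1.2]
    have hcB : ¬ (pB.1 < 1/2 ↔ pB.2 < 1/2) := by
      intro hc
      have := hc.mp hpB.1.2
      linarith [hpB.2.1]
    rw [(gval pA.1 pA.2).1 hcA, key, if_pos hcA, hI2] at eqA
    rw [(gval pB.1 pB.2).2 hcB, key, if_neg hcB, hI1] at eqB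
    constructor
    · linear_combination (2/3) * eqA + (2/3) * eqB
    · have h2 : β₂ * (6 * ε ^ 2) = -L := by linear_combination eqA - eqB
      field_simp
      linarith [h2]
  · rintro ⟨hb1, hb2⟩
    have hβ1 : β₁ = -(3/4) * β₂ := by linarith
    refine Filter.Eventually.of_forall ?_
    intro p
    by_cases hc : (p.1 < 1/2 ↔ p.2 < 1/2)
    · rw [(gval p.1 p.2).1 hc, key, if_pos hc, hI2, hβ1, hb2]
      field_simp
      ring
    · rw [(gval p.1 p.2).2 hc, key, if_neg hc, hI1, hβ1, hb2]
      field_simp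
      ring
end

section
/- Define φ : (0, 1/8] → ℝ by φ(t) = -I₀(1/2 + (1/8 - t)^{1/3}). Then there exist constants 0 < c₁ < c₂ < 1/8 such that φ is strictly concave on the interval (0, c₁) and strictly convex on the interval (c₂, 1/8). In particular φ, which equals the entropy density s(1/2, t) for 0 < t ≤ 1/8, fails to be concave near t = 1/8. -/
open MeasureTheory Set

set_option maxHeartbeats 1000000

noncomputable def psiF (x : ℝ) : ℝ :=
  Real.log (1/2 + x) - Real.log (1/2 - x) - 2*x / ((1+2*x) * (1-2*x))

lemma rpow_third_lt {s a : ℝ} (hs : 0 ≤ s) (ha : 0 < a) (h : s < a ^ 3) :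
    s ^ ((1:ℝ)/3) < a := by
  have h3 : (a ^ 3 : ℝ) ^ ((1:ℝ)/3) = a := by
    rw [← Real.rpow_natCast a 3, ← Real.rpow_mul ha.le]
    norm_num
  calc s ^ ((1:ℝ)/3) < (a ^ 3) ^ ((1:ℝ)/3) := Real.rpow_lt_rpow hs h (by norm_num)
    _ = a := h3

lemma rpow_third_le {s a : ℝ} (ha : 0 ≤ a) (h : a ^ 3 ≤ s) :
    a ≤ s ^ ((1:ℝ)/3) := by
  have h3 : (a ^ 3 : ℝ) ^ ((1:ℝ)/3) = a := by
    rw [← Real.rpow_natCast a 3, ← Real.rpow_mul ha]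
    norm_num
  calc a = (a ^ 3) ^ ((1:ℝ)/3) := h3.symm
    _ ≤ s ^ ((1:ℝ)/3) := Real.rpow_le_rpow (by positivity) h (by norm_num)

lemma pow_23 {s : ℝ} (hs : 0 < s) : s ^ (-(2:ℝ)/3) = ((s ^ ((1:ℝ)/3)) ^ 2)⁻¹ := by
  rw [← Real.rpow_natCast (s ^ ((1:ℝ)/3)) 2, ← Real.rpow_mul hs.le, ← Real.rpow_neg hs.le]
  norm_num

lemma pow_53 {s : ℝ} (hs : 0 < s) : s ^ (-(5:ℝ)/3) = ((s ^ ((1:ℝ)/3)) ^ 5)⁻¹ := by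
  rw [← Real.rpow_natCast (s ^ ((1:ℝ)/3)) 5, ← Real.rpow_mul hs.le, ← Real.rpow_neg hs.le]
  norm_num

lemma psi_hasDeriv {x : ℝ} (h1 : -(1/2) < x) (h2 : x < 1/2) :
    HasDerivAt psiF ((2 - 24*x^2) / ((1+2*x)^2 * (1-2*x)^2) : ℝ) x := by
  have hp : (0:ℝ) < 1/2 + x := by linarith
  have hm : (0:ℝ) < 1/2 - x := by linarith
  have hA : (0:ℝ) < 1 + 2*x := by linarith
  have hB : (0:ℝ) < 1 - 2*x := by linarith
  have ha : HasDerivAt (fun x : ℝ => 1/2 + x) 1 x := by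
    simpa using (hasDerivAt_id x).const_add (1/2 : ℝ)
  have hb : HasDerivAt (fun x : ℝ => 1/2 - x) (-1) x := by
    simpa using (hasDerivAt_id x).const_sub (1/2 : ℝ)
  have ha2 : HasDerivAt (fun x : ℝ => 1 + 2*x) 2 x := by
    simpa using ((hasDerivAt_id x).const_mul (2:ℝ)).const_add (1 : ℝ)
  have hb2 : HasDerivAt (fun x : ℝ => 1 - 2*x) (-2) x := by
    simpa using ((hasDerivAt_id x).const_mul (2:ℝ)).const_sub (1 : ℝ)
  have hl1 := ha.log hp.ne'
  have hl2 := hb.log hm.ne'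
  have hden : HasDerivAt (fun x : ℝ => (1 + 2*x) * (1 - 2*x)) (2 * (1 - 2*x) + (1 + 2*x) * (-2)) x := ha2.mul hb2
  have hnum : HasDerivAt (fun x : ℝ => 2*x) 2 x := by
    simpa using (hasDerivAt_id x).const_mul (2:ℝ)
  have hfrac := hnum.div hden (mul_ne_zero hA.ne' hB.ne')
  have hmain := (hl1.sub hl2).sub hfrac
  refine hmain.congr_deriv ?_
  have hA' : (1 + x*2 : ℝ) ≠ 0 := by nlinarith
  have hB' : (1 - x*2 : ℝ) ≠ 0 := by nlinarith
  field_simp [hA.ne', hB.ne', hp.ne', hm.ne', hA', hB']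
  ring

lemma psi_pos {x : ℝ} (h0 : 0 < x) (h4 : x ≤ 1/4) : 0 < psiF x := by
  have mono : StrictMonoOn psiF (Icc 0 (1/4)) := by
    apply strictMonoOn_of_deriv_pos (convex_Icc _ _)
    · intro y hy
      have hy1 : (0:ℝ) ≤ y := hy.1
      have hy2 : y ≤ (1/4:ℝ) := hy.2
      exact (psi_hasDeriv (by linarith) (by linarith)).continuousAt.continuousWithinAt
    · intro y hy
      rw [interior_Icc] at hy
      obtain ⟨hy0, hy4⟩ := hy
      have hd := psi_hasDeriv (x := y) (by linarith) (by linarith)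
      rw [hd.deriv]
      have hA : (0:ℝ) < 1 + 2*y := by linarith
      have hB : (0:ℝ) < 1 - 2*y := by linarith
      exact div_pos (by nlinarith) (by positivity)
  have h0' : psiF 0 = 0 := by norm_num [psiF]
  have := mono (Set.mem_Icc.mpr ⟨le_refl 0, by norm_num⟩) (Set.mem_Icc.mpr ⟨h0.le, h4⟩) h0
  linarith

lemma psi_neg {x : ℝ} (h1 : 0.486 ≤ x) (h2 : x < 1/2) : psiF x < 0 := by
  have hp : (0:ℝ) < 1/2 + x := by linarith
  have hp1 : 1/2 + x < 1 := by linarith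
  have hz : (0:ℝ) < 1/2 - x := by linarith
  have hA : (0:ℝ) < 1 + 2*x := by linarith
  have hB : (0:ℝ) < 1 - 2*x := by linarith
  have hs : 0 < Real.sqrt (1/2 - x) := Real.sqrt_pos.2 hz
  have hsq : Real.sqrt (1/2 - x) * Real.sqrt (1/2 - x) = 1/2 - x := Real.mul_self_sqrt hz.le
  have hsz : Real.sqrt (1/2 - x) < 0.1215 := by
    rw [Real.sqrt_lt' (by norm_num)]
    nlinarith
  have hli : Real.log (Real.sqrt (1/2 - x))⁻¹ ≤ (Real.sqrt (1/2 - x))⁻¹ - 1 :=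
    Real.log_le_sub_one_of_pos (by positivity)
  rw [Real.log_inv] at hli
  have hlz : Real.log (1/2 - x) = 2 * Real.log (Real.sqrt (1/2 - x)) := by
    rw [Real.log_sqrt hz.le]; ring
  have hinv : (Real.sqrt (1/2 - x))⁻¹ = 1 / Real.sqrt (1/2 - x) := (one_div _).symm
  have heq : (2:ℝ) / Real.sqrt (1/2 - x) = 2 * (Real.sqrt (1/2 - x))⁻¹ :=
    div_eq_mul_inv 2 _
  have hneg : -Real.log (1/2 - x) ≤ 2 / Real.sqrt (1/2 - x) := by
    rw [heq, hlz]; linarith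
  have h2z : 2 / Real.sqrt (1/2 - x) ≤ 0.243 / (1/2 - x) := by
    rw [div_le_div_iff₀ hs hz]
    linarith [mul_le_mul_of_nonneg_right hsz.le hs.le]
  have hT : 0.243 / (1/2 - x) ≤ 2*x / ((1+2*x) * (1-2*x)) := by
    rw [div_le_div_iff₀ hz (by positivity)]
    nlinarith [mul_nonneg (by linarith : (0:ℝ) ≤ x - 0.486) (by linarith : (0:ℝ) ≤ 1/2 - x)]
  have hlog1 : Real.log (1/2 + x) < 0 := Real.log_neg (by linarith) hp1
  have hval : psiF x = Real.log (1/2 + x) + (-Real.log (1/2 - x)) -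
      2*x / ((1+2*x) * (1-2*x)) := by
    unfold psiF; ring
  rw [hval]
  linarith

noncomputable def phiD1 (t : ℝ) : ℝ :=
  1/6 * ((1/8 - t) ^ (-(2:ℝ)/3) *
    (Real.log (1/2 + (1/8 - t) ^ ((1:ℝ)/3)) - Real.log (1/2 - (1/8 - t) ^ ((1:ℝ)/3))))

noncomputable def phiD2 (t : ℝ) : ℝ :=
  (1/8 - t) ^ (-(5:ℝ)/3) * (1/9) * psiF ((1/8 - t) ^ ((1:ℝ)/3))

lemma phi_hasDeriv {t : ℝ} (h0 : 0 < t) (h8 : t < 1/8) :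
    HasDerivAt (fun t : ℝ => -I0 (1/2 + (1/8 - t) ^ ((1:ℝ)/3))) (phiD1 t) t := by
  have hs : (0:ℝ) < 1/8 - t := by linarith
  have hx0 : 0 < (1/8 - t) ^ ((1:ℝ)/3) := Real.rpow_pos_of_pos hs _
  have hxlt : (1/8 - t) ^ ((1:ℝ)/3) < 1/2 :=
    rpow_third_lt hs.le one_half_pos (by norm_num; linarith)
  have hu : (0:ℝ) < 1/2 + (1/8 - t) ^ ((1:ℝ)/3) := by linarith
  have hv : (0:ℝ) < 1 - (1/2 + (1/8 - t) ^ ((1:ℝ)/3)) := by linarith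
  have hd0 : HasDerivAt (fun t : ℝ => 1/8 - t) (-1) t := by
    simpa using (hasDerivAt_id t).const_sub (1/8 : ℝ)
  have hdx := hd0.rpow_const (p := (1:ℝ)/3) (Or.inl hs.ne')
  have hdu := hdx.const_add (1/2 : ℝ)
  have hdlogu := hdu.log hu.ne'
  have hd1u := hdu.const_sub (1 : ℝ)
  have hdlog1u := hd1u.log hv.ne'
  have hmain := (((hdu.mul hdlogu).add (hd1u.mul hdlog1u)).const_mul (1/2 : ℝ)).neg
  simp only [I0]
  refine hmain.congr_deriv ?_
  unfold phiD1
  rw [show (1:ℝ)/3 - 1 = -(2:ℝ)/3 by norm_num, pow_23 hs,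
    show (1:ℝ) - (1/2 + (1/8 - t) ^ ((1:ℝ)/3)) = 1/2 - (1/8 - t) ^ ((1:ℝ)/3) by ring]
  obtain ⟨a, hax, ha0, halt⟩ : ∃ a : ℝ, (1/8 - t) ^ ((1:ℝ)/3) = a ∧ 0 < a ∧ a < 1/2 :=
    ⟨_, rfl, hx0, hxlt⟩
  rw [hax]
  have hu' : (0:ℝ) < 1/2 + a := by linarith
  have hw' : (0:ℝ) < 1/2 - a := by linarith
  have hq1 : (0:ℝ) < a^2*3 - a^3*6 := by nlinarith [mul_pos (mul_pos ha0 ha0) hw']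
  have hq2 : (0:ℝ) < a^2*6 + a^3*12 := by positivity
  have hq3 : (0:ℝ) < 1 - a^2*4 := by nlinarith [mul_pos hu' hw']
  field_simp [hu'.ne', hw'.ne', ha0.ne', hq1.ne', hq2.ne', hq3.ne']
  all_goals ring_nf
  all_goals field_simp [hq1.ne', hq2.ne', hq3.ne', (by linarith : (0:ℝ) < 1 - a*2).ne']
  all_goals ring

lemma phiD1_hasDeriv {t : ℝ} (h0 : 0 < t) (h8 : t < 1/8) :
    HasDerivAt phiD1 (phiD2 t) t := by
  have hs : (0:ℝ) < 1/8 - t := by linarith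
  have hx0 : 0 < (1/8 - t) ^ ((1:ℝ)/3) := Real.rpow_pos_of_pos hs _
  have hxlt : (1/8 - t) ^ ((1:ℝ)/3) < 1/2 :=
    rpow_third_lt hs.le one_half_pos (by norm_num; linarith)
  have hu : (0:ℝ) < 1/2 + (1/8 - t) ^ ((1:ℝ)/3) := by linarith
  have hw : (0:ℝ) < 1/2 - (1/8 - t) ^ ((1:ℝ)/3) := by linarith
  have hd0 : HasDerivAt (fun t : ℝ => 1/8 - t) (-1) t := by
    simpa using (hasDerivAt_id t).const_sub (1/8 : ℝ)
  have hdp := hd0.rpow_const (p := -(2:ℝ)/3) (Or.inl hs.ne')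
  have hdx := hd0.rpow_const (p := (1:ℝ)/3) (Or.inl hs.ne')
  have hdu := hdx.const_add (1/2 : ℝ)
  have hdw := hdx.const_sub (1/2 : ℝ)
  have hlog1 := hdu.log hu.ne'
  have hlog2 := hdw.log hw.ne'
  have hmain := (hdp.mul (hlog1.sub hlog2)).const_mul (1/6 : ℝ)
  refine HasDerivAt.congr_deriv hmain ?_
  simp only [Pi.sub_apply]
  unfold phiD2 psiF
  rw [show -(2:ℝ)/3 - 1 = -(5:ℝ)/3 by norm_num,
    show (1:ℝ)/3 - 1 = -(2:ℝ)/3 by norm_num, pow_23 hs, pow_53 hs]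
  obtain ⟨a, hax, ha0, halt⟩ : ∃ a : ℝ, (1/8 - t) ^ ((1:ℝ)/3) = a ∧ 0 < a ∧ a < 1/2 :=
    ⟨_, rfl, hx0, hxlt⟩
  rw [hax]
  have hu' : (0:ℝ) < 1/2 + a := by linarith
  have hw' : (0:ℝ) < 1/2 - a := by linarith
  have hA : (0:ℝ) < 1 + 2*a := by linarith
  have hB : (0:ℝ) < 1 - 2*a := by linarith
  have hq1 : (0:ℝ) < a^2*3 - a^3*6 := by nlinarith [mul_pos (mul_pos ha0 ha0) hw']
  have hq2 : (0:ℝ) < a^2*6 + a^3*12 := by positivity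
  have hq3 : (0:ℝ) < 1 - a^2*4 := by nlinarith [mul_pos hu' hw']
  field_simp [hu'.ne', hw'.ne', ha0.ne', hA.ne', hB.ne', hq1.ne', hq2.ne', hq3.ne']
  all_goals ring_nf
  all_goals field_simp [hq1.ne', hq2.ne', hq3.ne']
  all_goals ring

lemma deriv2_eq {t : ℝ} (h0 : 0 < t) (h8 : t < 1/8) :
    deriv^[2] (fun t : ℝ => -I0 (1/2 + (1/8 - t) ^ ((1:ℝ)/3))) t = phiD2 t := by
  have hev : deriv (fun t : ℝ => -I0 (1/2 + (1/8 - t) ^ ((1:ℝ)/3))) =ᶠ[nhds t] phiD1 :=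
    Filter.eventuallyEq_of_mem (Ioo_mem_nhds h0 h8)
      (fun r hr => (phi_hasDeriv hr.1 hr.2).deriv)
  show deriv (deriv (fun t : ℝ => -I0 (1/2 + (1/8 - t) ^ ((1:ℝ)/3)))) t = phiD2 t
  rw [hev.deriv_eq, (phiD1_hasDeriv h0 h8).deriv]


/-- The entropy profile `φ(t) = -I₀(1/2 + (1/8 - t)^{1/3})` on `(0, 1/8]` is
strictly concave on some initial interval `(0, c₁)` and strictly convex on some
final interval `(c₂, 1/8)`, with `0 < c₁ < c₂ < 1/8`. -/
theorem entropy_profile_convexity :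
    ∃ c₁ c₂ : ℝ, 0 < c₁ ∧ c₁ < c₂ ∧ c₂ < 1/8 ∧
      StrictConcaveOn ℝ (Ioo (0:ℝ) c₁)
        (fun t : ℝ => -I0 (1/2 + (1/8 - t) ^ ((1:ℝ)/3))) ∧
      StrictConvexOn ℝ (Ioo c₂ (1/8 : ℝ))
        (fun t : ℝ => -I0 (1/2 + (1/8 - t) ^ ((1:ℝ)/3))) := by
  refine ⟨1/100, 7/64, by norm_num, by norm_num, by norm_num, ?_, ?_⟩
  · apply strictConcaveOn_of_deriv2_neg (convex_Ioo _ _)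
    · intro t ht
      exact (phi_hasDeriv ht.1 (by linarith [ht.2])).continuousAt.continuousWithinAt
    · intro t ht
      rw [interior_Ioo] at ht
      have h0 : 0 < t := ht.1
      have h8 : t < 1/8 := by linarith [ht.2]
      rw [deriv2_eq h0 h8]
      have hs : (0:ℝ) < 1/8 - t := by linarith
      have hxlt : (1/8 - t) ^ ((1:ℝ)/3) < 1/2 :=
        rpow_third_lt hs.le one_half_pos (by norm_num; linarith)
      have hxge : (0.486 : ℝ) ≤ (1/8 - t) ^ ((1:ℝ)/3) := by
        refine rpow_third_le (by norm_num) ?_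
        have h2 : t < 1/100 := ht.2
        norm_num
        linarith
      have hneg := psi_neg hxge hxlt
      have hpos : (0:ℝ) < (1/8 - t) ^ (-(5:ℝ)/3) * (1/9) :=
        mul_pos (Real.rpow_pos_of_pos hs _) (by norm_num)
      unfold phiD2
      exact mul_neg_of_pos_of_neg hpos hneg
  · apply strictConvexOn_of_deriv2_pos (convex_Ioo _ _)
    · intro t ht
      have h0 : 0 < t := lt_trans (by norm_num) ht.1
      exact (phi_hasDeriv h0 ht.2).continuousAt.continuousWithinAt
    · intro t ht
      rw [interior_Ioo] at ht
      have h0 : 0 < t := lt_trans (by norm_num) ht.1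
      have h8 : t < 1/8 := ht.2
      rw [deriv2_eq h0 h8]
      have hs : (0:ℝ) < 1/8 - t := by linarith
      have hx0 : 0 < (1/8 - t) ^ ((1:ℝ)/3) := Real.rpow_pos_of_pos hs _
      have hxlt : (1/8 - t) ^ ((1:ℝ)/3) < 1/4 := by
        refine rpow_third_lt hs.le (by norm_num) ?_
        have h1 : 7/64 < t := ht.1
        norm_num
        linarith
      have hpsi := psi_pos hx0 hxlt.le
      have hpos : (0:ℝ) < (1/8 - t) ^ (-(5:ℝ)/3) * (1/9) :=
        mul_pos (Real.rpow_pos_of_pos hs _) (by norm_num)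
      unfold phiD2
      exact mul_pos hpos hpsi
end
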